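/- arXiv:2101.01711 — 7 statements merged into one kernel-verified Lean document; each statement's English description precedes it below -/
import Mathlib

section
/- Fix d ≥ 1, an inverse temperature β > 0, a disorder strength λ > 0, and a realization η : ℤ^d → ℝ^m of the field. Let Λ'_1, …, Λ'_N be pairwise disjoint bounded subsets of ℤ^d and let Λ' := ∪_{j=1}^N Λ'_j. Then: (i) Fluc_{Λ'}(η) ≤ Σ_{j=1}^N (|Λ'_j|/|Λ'|) Fluc_{Λ'_j}(η); (ii) for each i ∈ {1,…,m}, sup_{τ ∈ S^{ℤ^d∖Λ'}} Σ_{v∈Λ'} ⟨f_{v,i}(σ)⟩_{Λ'}^{τ} ≤ Σ_{j=1}^N sup_{τ ∈ S^{ℤ^d∖Λ'_j}} Σ_{v∈Λ'_j} ⟨f_{v,i}(σ)⟩_{Λ'_j}^{τ}; and (iii) for each i ∈ {1,…,m}, inf_{τ ∈ S^{ℤ^d∖Λ'}} Σ_{v∈Λ'} ⟨f_{v,i}(σ)⟩_{Λ'}^{τ} ≥ Σ_{j=1}^N inf_{τ ∈ S^{ℤ^d∖Λ'_j}} Σ_{v∈Λ'_j} ⟨f_{v,i}(σ)⟩_{Λ'_j}^{τ}.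 -/
open MeasureTheory ProbabilityTheory

noncomputable section

/-- The vertex set of the lattice `ℤ^d`. -/
abbrev Vtx (d : ℕ) := Fin d → ℤ

/-- The box `Λ_L = {-L, …, L}^d`. -/
def boxZ (d L : ℕ) : Finset (Vtx d) :=
  Fintype.piFinset fun _ => Finset.Icc (-(L : ℤ)) (L : ℤ)

/-- The Euclidean norm on `ℝ^m`. -/
def euclNorm {m : ℕ} (x : Fin m → ℝ) : ℝ := Real.sqrt (∑ i, (x i) ^ 2)

/-- The external vertex boundary `∂Λ = {v ∉ Λ : B(v,1) ∩ Λ ≠ ∅}` (ℓ∞-balls). -/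
def extBdry {d : ℕ} (Λ : Finset (Vtx d)) : Set (Vtx d) :=
  {v | v ∉ Λ ∧ ∃ w ∈ Λ, ∀ i, |v i - w i| ≤ 1}

variable {d : ℕ} {S : Type} [MeasurableSpace S]

/-- Gluing of an interior configuration on `Λ` with a boundary condition `τ` outside. -/
def glue (Λ : Finset (Vtx d)) (σΛ : ∀ _ : Λ, S) (τ : Vtx d → S) : Vtx d → S :=
  fun v => if h : v ∈ Λ then σΛ ⟨v, h⟩ else τ v

/-- The disordered Hamiltonian `H_Λ^{η,λ}(σ) = H_Λ(σ) - λ Σ_{v∈Λ} η_v · f_v(σ)`. -/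
def disH {m : ℕ} (H : Finset (Vtx d) → (Vtx d → S) → ℝ)
    (f : Vtx d → (Vtx d → S) → Fin m → ℝ) (lam : ℝ)
    (η : Vtx d → Fin m → ℝ) (Λ : Finset (Vtx d)) (σ : Vtx d → S) : ℝ :=
  H Λ σ - lam * ∑ v ∈ Λ, ∑ i, η v i * f v σ i

/-- The thermal expectation `⟨g(σ)⟩_Λ^τ` with respect to the finite-volume Gibbs measure
`μ^{η,λ}_{β,Λ,τ}` of the disordered system. -/
def gibbsExp {m : ℕ} (κ : Measure S) (H : Finset (Vtx d) → (Vtx d → S) → ℝ)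
    (f : Vtx d → (Vtx d → S) → Fin m → ℝ) (β lam : ℝ)
    (η : Vtx d → Fin m → ℝ) (Λ : Finset (Vtx d)) (τ : Vtx d → S)
    (g : (Vtx d → S) → ℝ) : ℝ :=
  (∫ σΛ : ∀ _ : Λ, S, g (glue Λ σΛ τ) *
      Real.exp (-β * disH H f lam η Λ (glue Λ σΛ τ)) ∂Measure.pi fun _ => κ) /
  (∫ σΛ : ∀ _ : Λ, S, Real.exp (-β * disH H f lam η Λ (glue Λ σΛ τ)) ∂Measure.pi fun _ => κ)

/-- The fluctuation observable
`Fluc_Λ(η) := sup_{τ₁,τ₂} |(1/|Λ|) Σ_{v∈Λ} (⟨f_v(σ)⟩_Λ^{τ₁} - ⟨f_v(σ)⟩_Λ^{τ₂})|`. -/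
def Fluc {m : ℕ} (κ : Measure S) (H : Finset (Vtx d) → (Vtx d → S) → ℝ)
    (f : Vtx d → (Vtx d → S) → Fin m → ℝ) (β lam : ℝ)
    (Λ : Finset (Vtx d)) (η : Vtx d → Fin m → ℝ) : ℝ :=
  ⨆ τ₁ : Vtx d → S, ⨆ τ₂ : Vtx d → S,
    euclNorm (fun i => ((Λ.card : ℝ))⁻¹ *
      ∑ v ∈ Λ, (gibbsExp κ H f β lam η Λ τ₁ (fun σ => f v σ i)
        - gibbsExp κ H f β lam η Λ τ₂ (fun σ => f v σ i)))

section Aux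
variable {m : ℕ}

lemma euclNorm_eq_norm (x : Fin m → ℝ) :
    euclNorm x = ‖(WithLp.equiv 2 (Fin m → ℝ)).symm x‖ := by
  rw [EuclideanSpace.norm_eq]
  unfold euclNorm
  congr 1
  refine Finset.sum_congr rfl fun i _ => ?_
  rw [Real.norm_eq_abs, sq_abs]
  rfl

lemma euclNorm_nonneg (x : Fin m → ℝ) : 0 ≤ euclNorm x := Real.sqrt_nonneg _

lemma abs_le_euclNorm (x : Fin m → ℝ) (i : Fin m) : |x i| ≤ euclNorm x := by
  rw [← Real.sqrt_sq_eq_abs]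
  exact Real.sqrt_le_sqrt (Finset.single_le_sum (fun j _ => sq_nonneg (x j)) (Finset.mem_univ i))

lemma euclNorm_smul (c : ℝ) (x : Fin m → ℝ) :
    euclNorm (fun i => c * x i) = |c| * euclNorm x := by
  rw [euclNorm_eq_norm, euclNorm_eq_norm]
  have : (WithLp.equiv 2 (Fin m → ℝ)).symm (fun i => c * x i)
      = c • (WithLp.equiv 2 (Fin m → ℝ)).symm x := by
    ext i; rfl
  rw [this, norm_smul, Real.norm_eq_abs]

lemma euclNorm_sum_le {ι : Type*} (s : Finset ι) (F : ι → Fin m → ℝ) :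
    euclNorm (fun i => ∑ j ∈ s, F j i) ≤ ∑ j ∈ s, euclNorm (F j) := by
  have : (WithLp.equiv 2 (Fin m → ℝ)).symm (fun i => ∑ j ∈ s, F j i)
      = ∑ j ∈ s, (WithLp.equiv 2 (Fin m → ℝ)).symm (F j) := by
    ext i
    simp [Finset.sum_apply]
  rw [euclNorm_eq_norm, this]
  refine le_trans (norm_sum_le _ _) ?_
  exact Finset.sum_le_sum fun j _ => le_of_eq (euclNorm_eq_norm (F j)).symm

lemma euclNorm_le_of_abs_le {x : Fin m → ℝ} {c : ℝ} (h : ∀ i, |x i| ≤ c) :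
    euclNorm x ≤ Real.sqrt m * c := by
  rcases le_or_gt 0 c with hc | hc
  · unfold euclNorm
    have : ∑ i, (x i)^2 ≤ ∑ _i : Fin m, c^2 :=
      Finset.sum_le_sum fun i _ => by
        rw [← sq_abs]; exact pow_le_pow_left₀ (abs_nonneg _) (h i) 2
    refine le_trans (Real.sqrt_le_sqrt this) ?_
    simp only [Finset.sum_const, Finset.card_univ, Fintype.card_fin, nsmul_eq_mul]
    rw [Real.sqrt_mul (by positivity), Real.sqrt_sq hc]
  · rcases m with _ | m
    · simp [euclNorm]
    · exact absurd (lt_of_le_of_lt (abs_nonneg _) (lt_of_le_of_lt (h 0) hc)) (lt_irrefl 0)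

end Aux
section Aux2
variable {d : ℕ} {S : Type} [MeasurableSpace S] {m : ℕ}

lemma measurable_glue (Λ : Finset (Vtx d)) :
    Measurable (fun p : (Vtx d → S) × (∀ _ : Λ, S) => glue Λ p.2 p.1) := by
  apply measurable_pi_lambda
  intro v
  by_cases h : v ∈ Λ
  · simpa [glue, h, Function.comp_def] using (measurable_pi_apply (⟨v, h⟩ : Λ)).comp measurable_snd
  · simpa [glue, h, Function.comp_def] using (measurable_pi_apply v).comp measurable_fst

lemma measurable_glue_left (Λ : Finset (Vtx d)) (τ : Vtx d → S) :
    Measurable (fun σΛ : ∀ _ : Λ, S => glue Λ σΛ τ) :=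
  (measurable_glue Λ).comp (measurable_prodMk_left)

lemma measurable_disH (H : Finset (Vtx d) → (Vtx d → S) → ℝ)
    (f : Vtx d → (Vtx d → S) → Fin m → ℝ)
    (hHmeas : ∀ Λ, Measurable (H Λ)) (hfmeas : ∀ v i, Measurable fun σ => f v σ i)
    (lam : ℝ) (η : Vtx d → Fin m → ℝ) (Λ : Finset (Vtx d)) :
    Measurable (disH H f lam η Λ) := by
  unfold disH
  exact (hHmeas Λ).sub (measurable_const.mul (Finset.measurable_sum _ fun v _ =>
    Finset.measurable_sum _ fun i _ => measurable_const.mul (hfmeas v i)))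

omit [MeasurableSpace S] in
lemma abs_f_le (f : Vtx d → (Vtx d → S) → Fin m → ℝ)
    (hfbdd : ∀ v σ, euclNorm (f v σ) ≤ 1) (v : Vtx d) (σ : Vtx d → S) (i : Fin m) :
    |f v σ i| ≤ 1 := le_trans (abs_le_euclNorm _ i) (hfbdd v σ)

omit [MeasurableSpace S] in
lemma disH_bdd (H : Finset (Vtx d) → (Vtx d → S) → ℝ)
    (f : Vtx d → (Vtx d → S) → Fin m → ℝ)
    (hHbdd : ∀ Λ, ∃ C, ∀ σ, |H Λ σ| ≤ C)
    (hfbdd : ∀ v σ, euclNorm (f v σ) ≤ 1)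
    (lam : ℝ) (η : Vtx d → Fin m → ℝ) (Λ : Finset (Vtx d)) :
    ∃ C, ∀ σ, |disH H f lam η Λ σ| ≤ C := by
  obtain ⟨C, hC⟩ := hHbdd Λ
  refine ⟨C + |lam| * ∑ v ∈ Λ, ∑ i, |η v i|, fun σ => ?_⟩
  unfold disH
  refine le_trans (abs_sub _ _) (add_le_add (hC σ) ?_)
  rw [abs_mul]
  refine mul_le_mul_of_nonneg_left ?_ (abs_nonneg _)
  refine le_trans (Finset.abs_sum_le_sum_abs _ _) (Finset.sum_le_sum fun v _ => ?_)
  refine le_trans (Finset.abs_sum_le_sum_abs _ _) (Finset.sum_le_sum fun i _ => ?_)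
  rw [abs_mul]
  calc |η v i| * |f v σ i| ≤ |η v i| * 1 :=
        mul_le_mul_of_nonneg_left (abs_f_le f hfbdd v σ i) (abs_nonneg _)
    _ = |η v i| := mul_one _

end Aux2
section Avg
variable {Ω : Type*} [MeasurableSpace Ω] (μ : Measure Ω) [IsProbabilityMeasure μ]

/-- Normalized weighted average. -/
def avg (w g : Ω → ℝ) : ℝ := (∫ x, g x * w x ∂μ) / (∫ x, w x ∂μ)

variable {w : Ω → ℝ} {a b : ℝ} (hw : Measurable w) (ha : 0 < a)
  (hlb : ∀ x, a ≤ w x) (hub : ∀ x, w x ≤ b)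

include hw ha hlb hub

lemma w_integrable : Integrable w μ := by
  refine Integrable.mono' (integrable_const b) hw.aestronglyMeasurable ?_
  exact ae_of_all _ fun x => by
    rw [Real.norm_eq_abs, abs_of_pos (lt_of_lt_of_le ha (hlb x))]; exact hub x

lemma Z_pos : 0 < ∫ x, w x ∂μ := by
  have h1 : ∫ x, a ∂μ ≤ ∫ x, w x ∂μ :=
    integral_mono (integrable_const a) (w_integrable μ hw ha hlb hub) hlb
  have h2 : ∫ x, a ∂μ = a := by simp
  linarith

lemma mul_w_integrable {g : Ω → ℝ} {c : ℝ} (hg : Measurable g) (hgb : ∀ x, |g x| ≤ c) :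
    Integrable (fun x => g x * w x) μ := by
  refine Integrable.mono' (integrable_const (c * b)) (hg.mul hw).aestronglyMeasurable ?_
  refine ae_of_all _ fun x => ?_
  rw [Real.norm_eq_abs, abs_mul, abs_of_pos (lt_of_lt_of_le ha (hlb x))]
  have h0 : (0:ℝ) ≤ c := le_trans (abs_nonneg _) (hgb x)
  exact mul_le_mul (hgb x) (hub x) (le_of_lt (lt_of_lt_of_le ha (hlb x))) h0

lemma avg_le_of_le {g : Ω → ℝ} {c c₂ : ℝ} (hg : Measurable g) (hgb : ∀ x, |g x| ≤ c)
    (h2 : ∀ x, g x ≤ c₂) : avg μ w g ≤ c₂ := by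
  have hZ := Z_pos μ hw ha hlb hub
  rw [avg, div_le_iff₀ hZ]
  rw [← integral_const_mul]
  refine integral_mono (mul_w_integrable μ hw ha hlb hub hg hgb)
    ((w_integrable μ hw ha hlb hub).const_mul c₂) fun x => ?_
  exact mul_le_mul_of_nonneg_right (h2 x) (le_of_lt (lt_of_lt_of_le ha (hlb x)))

lemma le_avg_of_le {g : Ω → ℝ} {c c₂ : ℝ} (hg : Measurable g) (hgb : ∀ x, |g x| ≤ c)
    (h2 : ∀ x, c₂ ≤ g x) : c₂ ≤ avg μ w g := by
  have hZ := Z_pos μ hw ha hlb hub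
  rw [avg, le_div_iff₀ hZ]
  rw [← integral_const_mul]
  refine integral_mono ((w_integrable μ hw ha hlb hub).const_mul c₂)
    (mul_w_integrable μ hw ha hlb hub hg hgb) fun x => ?_
  exact mul_le_mul_of_nonneg_right (h2 x) (le_of_lt (lt_of_lt_of_le ha (hlb x)))

lemma avg_abs_le {g : Ω → ℝ} {c : ℝ} (hg : Measurable g) (hgb : ∀ x, |g x| ≤ c) :
    |avg μ w g| ≤ c := by
  rw [abs_le]
  constructor
  · exact le_avg_of_le μ hw ha hlb hub hg hgb fun x => neg_le_of_abs_le (hgb x)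
  · exact avg_le_of_le μ hw ha hlb hub hg hgb fun x => le_of_abs_le (hgb x)

lemma avg_const (c : ℝ) : avg μ w (fun _ => c) = c := by
  have hZ := Z_pos μ hw ha hlb hub
  rw [avg, integral_const_mul, mul_div_assoc, div_self (ne_of_gt hZ), mul_one]

lemma avg_sub_const {g : Ω → ℝ} {c₀ : ℝ} (hg : Measurable g) {c : ℝ} (hgb : ∀ x, |g x| ≤ c) :
    avg μ w (fun x => g x - c₀) = avg μ w g - c₀ := by
  have hZ := Z_pos μ hw ha hlb hub
  rw [avg, avg]
  have : (fun x => (g x - c₀) * w x) = fun x => g x * w x - c₀ * w x := by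
    funext x; ring
  rw [this, integral_sub (mul_w_integrable μ hw ha hlb hub hg hgb)
    ((w_integrable μ hw ha hlb hub).const_mul c₀), sub_div, integral_const_mul,
    mul_div_assoc, div_self (ne_of_gt hZ), mul_one]

lemma avg_const_sub {g : Ω → ℝ} {c₀ : ℝ} (hg : Measurable g) {c : ℝ} (hgb : ∀ x, |g x| ≤ c) :
    avg μ w (fun x => c₀ - g x) = c₀ - avg μ w g := by
  have hZ := Z_pos μ hw ha hlb hub
  rw [avg, avg]
  have : (fun x => (c₀ - g x) * w x) = fun x => c₀ * w x - g x * w x := by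
    funext x; ring
  rw [this, integral_sub ((w_integrable μ hw ha hlb hub).const_mul c₀)
    (mul_w_integrable μ hw ha hlb hub hg hgb), sub_div, integral_const_mul,
    mul_div_assoc, div_self (ne_of_gt hZ), mul_one]

lemma avg_sum {ι : Type*} (s : Finset ι) (g : ι → Ω → ℝ)
    (hg : ∀ j ∈ s, Measurable (g j)) (c : ι → ℝ) (hgb : ∀ j ∈ s, ∀ x, |g j x| ≤ c j) :
    avg μ w (fun x => ∑ j ∈ s, g j x) = ∑ j ∈ s, avg μ w (g j) := by
  have hZ := Z_pos μ hw ha hlb hub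
  simp only [avg]
  rw [← Finset.sum_div]
  congr 1
  have : (fun x => (∑ j ∈ s, g j x) * w x) = fun x => ∑ j ∈ s, g j x * w x := by
    funext x; rw [Finset.sum_mul]
  rw [this]
  exact integral_finset_sum s fun j hj => mul_w_integrable μ hw ha hlb hub (hg j hj) (hgb j hj)

lemma avg_jensen {m : ℕ} (F : Ω → Fin m → ℝ) {c : ℝ} (hc : 0 ≤ c)
    (hFm : ∀ i, Measurable (fun x => F x i)) (hFb : ∀ x, euclNorm (F x) ≤ c) :
    euclNorm (fun i => avg μ w (fun x => F x i)) ≤ c := by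
  have hZ := Z_pos μ hw ha hlb hub
  set E := EuclideanSpace ℝ (Fin m)
  set Φ : Ω → E := fun x => (WithLp.equiv 2 (Fin m → ℝ)).symm (fun i => F x i * w x) with hΦ
  have hΦm : Measurable Φ := by
    exact (WithLp.measurable_toLp 2 (Fin m → ℝ)).comp (measurable_pi_lambda _ fun i => (hFm i).mul hw)
  have hΦnorm : ∀ x, ‖Φ x‖ = euclNorm (F x) * w x := by
    intro x
    rw [← euclNorm_eq_norm]
    have : (fun i => F x i * w x) = fun i => w x * F x i := by funext i; ring
    rw [this, euclNorm_smul, abs_of_pos (lt_of_lt_of_le ha (hlb x))]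
    ring
  have hΦint : Integrable Φ μ := by
    refine Integrable.mono' (integrable_const (c * b)) hΦm.aestronglyMeasurable ?_
    refine ae_of_all _ fun x => ?_
    rw [hΦnorm x]
    exact mul_le_mul (hFb x) (hub x) (le_of_lt (lt_of_lt_of_le ha (hlb x))) hc
  have hproj : ∀ i, (∫ x, Φ x ∂μ) i = ∫ x, F x i * w x ∂μ := by
    intro i
    have := (EuclideanSpace.proj (𝕜 := ℝ) i).integral_comp_comm hΦint
    simpa [Φ] using this.symm
  have key : euclNorm (fun i => ∫ x, F x i * w x ∂μ) ≤ c * ∫ x, w x ∂μ := by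
    have heq : (WithLp.equiv 2 (Fin m → ℝ)).symm (fun i => ∫ x, F x i * w x ∂μ)
        = ∫ x, Φ x ∂μ := by
      ext i
      exact (hproj i).symm
    rw [euclNorm_eq_norm, heq]
    refine le_trans (norm_integral_le_integral_norm Φ) ?_
    have : ∀ x, ‖Φ x‖ ≤ c * w x := fun x => by
      rw [hΦnorm x]
      exact mul_le_mul_of_nonneg_right (hFb x) (le_of_lt (lt_of_lt_of_le ha (hlb x)))
    calc ∫ x, ‖Φ x‖ ∂μ ≤ ∫ x, c * w x ∂μ :=
          integral_mono hΦint.norm ((w_integrable μ hw ha hlb hub).const_mul c) this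
      _ = c * ∫ x, w x ∂μ := integral_const_mul c _
  have : (fun i => avg μ w (fun x => F x i))
      = fun i => (∫ x, w x ∂μ)⁻¹ * ∫ x, F x i * w x ∂μ := by
    funext i
    rw [avg, div_eq_inv_mul]
  rw [this, euclNorm_smul, abs_of_pos (inv_pos.mpr hZ)]
  rw [inv_mul_le_iff₀ hZ]
  calc euclNorm (fun i => ∫ x, F x i * w x ∂μ) ≤ c * ∫ x, w x ∂μ := key
    _ = (∫ x, w x ∂μ) * c := mul_comm _ _

end Avg
section GibbsL
variable {d : ℕ} {S : Type} [MeasurableSpace S] {m : ℕ}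
variable (κ : Measure S) [IsProbabilityMeasure κ]
variable (H : Finset (Vtx d) → (Vtx d → S) → ℝ) (f : Vtx d → (Vtx d → S) → Fin m → ℝ)
variable (β lam : ℝ) (η : Vtx d → Fin m → ℝ)

/-- The Gibbs weight. -/
def Wt (Λ : Finset (Vtx d)) (τ : Vtx d → S) (σΛ : ∀ _ : Λ, S) : ℝ :=
  Real.exp (-β * disH H f lam η Λ (glue Λ σΛ τ))

omit [IsProbabilityMeasure κ] in
lemma gibbsExp_eq_avg (Λ : Finset (Vtx d)) (τ : Vtx d → S) (g : (Vtx d → S) → ℝ) :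
    gibbsExp κ H f β lam η Λ τ g
      = avg (Measure.pi fun _ : Λ => κ) (Wt H f β lam η Λ τ) (fun σΛ => g (glue Λ σΛ τ)) :=
  rfl

omit [IsProbabilityMeasure κ] in
lemma Wt_meas (hHmeas : ∀ Λ, Measurable (H Λ)) (hfmeas : ∀ v i, Measurable fun σ => f v σ i)
    (Λ : Finset (Vtx d)) (τ : Vtx d → S) : Measurable (Wt H f β lam η Λ τ) :=
  Real.measurable_exp.comp (measurable_const.mul
    ((measurable_disH H f hHmeas hfmeas lam η Λ).comp (measurable_glue_left Λ τ)))

omit [MeasurableSpace S] [IsProbabilityMeasure κ] in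
lemma Wt_bdd (hHbdd : ∀ Λ, ∃ C, ∀ σ, |H Λ σ| ≤ C) (hfbdd : ∀ v σ, euclNorm (f v σ) ≤ 1)
    (Λ : Finset (Vtx d)) :
    ∃ a b : ℝ, 0 < a ∧ ∀ (τ : Vtx d → S) (σΛ : ∀ _ : Λ, S),
      a ≤ Wt H f β lam η Λ τ σΛ ∧ Wt H f β lam η Λ τ σΛ ≤ b := by
  obtain ⟨C, hC⟩ := disH_bdd H f hHbdd hfbdd lam η Λ
  refine ⟨Real.exp (-(|β| * C)), Real.exp (|β| * C), Real.exp_pos _, fun τ σΛ => ?_⟩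
  have habs : |(-β) * disH H f lam η Λ (glue Λ σΛ τ)| ≤ |β| * C := by
    rw [abs_mul, abs_neg]
    exact mul_le_mul_of_nonneg_left (hC _) (abs_nonneg β)
  obtain ⟨h1, h2⟩ := abs_le.mp habs
  exact ⟨Real.exp_le_exp.mpr h1, Real.exp_le_exp.mpr h2⟩

variable (hHmeas : ∀ Λ, Measurable (H Λ)) (hHbdd : ∀ Λ, ∃ C, ∀ σ, |H Λ σ| ≤ C)
  (hfmeas : ∀ v i, Measurable fun σ => f v σ i) (hfbdd : ∀ v σ, euclNorm (f v σ) ≤ 1)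

include hHmeas hHbdd hfmeas hfbdd

lemma gibbsExp_abs_le (Λ : Finset (Vtx d)) (τ : Vtx d → S) {g : (Vtx d → S) → ℝ}
    (hg : Measurable g) {c : ℝ} (hgb : ∀ σ, |g σ| ≤ c) :
    |gibbsExp κ H f β lam η Λ τ g| ≤ c := by
  obtain ⟨a, b, ha, hab⟩ := Wt_bdd H f β lam η hHbdd hfbdd Λ
  rw [gibbsExp_eq_avg]
  exact avg_abs_le _ (Wt_meas H f β lam η hHmeas hfmeas Λ τ) ha
    (fun x => (hab τ x).1) (fun x => (hab τ x).2)
    (hg.comp (measurable_glue_left Λ τ)) (fun x => hgb _)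

lemma gibbsExp_le_of_le (Λ : Finset (Vtx d)) (τ : Vtx d → S) {g : (Vtx d → S) → ℝ}
    (hg : Measurable g) {c c₂ : ℝ} (hgb : ∀ σ, |g σ| ≤ c) (h2 : ∀ σ, g σ ≤ c₂) :
    gibbsExp κ H f β lam η Λ τ g ≤ c₂ := by
  obtain ⟨a, b, ha, hab⟩ := Wt_bdd H f β lam η hHbdd hfbdd Λ
  rw [gibbsExp_eq_avg]
  exact avg_le_of_le _ (Wt_meas H f β lam η hHmeas hfmeas Λ τ) ha
    (fun x => (hab τ x).1) (fun x => (hab τ x).2)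
    (hg.comp (measurable_glue_left Λ τ)) (fun x => hgb _) (fun x => h2 _)

lemma le_gibbsExp_of_le (Λ : Finset (Vtx d)) (τ : Vtx d → S) {g : (Vtx d → S) → ℝ}
    (hg : Measurable g) {c c₂ : ℝ} (hgb : ∀ σ, |g σ| ≤ c) (h2 : ∀ σ, c₂ ≤ g σ) :
    c₂ ≤ gibbsExp κ H f β lam η Λ τ g := by
  obtain ⟨a, b, ha, hab⟩ := Wt_bdd H f β lam η hHbdd hfbdd Λ
  rw [gibbsExp_eq_avg]
  exact le_avg_of_le _ (Wt_meas H f β lam η hHmeas hfmeas Λ τ) ha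
    (fun x => (hab τ x).1) (fun x => (hab τ x).2)
    (hg.comp (measurable_glue_left Λ τ)) (fun x => hgb _) (fun x => h2 _)

lemma gibbsExp_sub_const (Λ : Finset (Vtx d)) (τ : Vtx d → S) {g : (Vtx d → S) → ℝ}
    (hg : Measurable g) {c : ℝ} (hgb : ∀ σ, |g σ| ≤ c) (c₀ : ℝ) :
    gibbsExp κ H f β lam η Λ τ (fun σ => g σ - c₀)
      = gibbsExp κ H f β lam η Λ τ g - c₀ := by
  obtain ⟨a, b, ha, hab⟩ := Wt_bdd H f β lam η hHbdd hfbdd Λ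
  rw [gibbsExp_eq_avg, gibbsExp_eq_avg]
  exact avg_sub_const _ (Wt_meas H f β lam η hHmeas hfmeas Λ τ) ha
    (fun x => (hab τ x).1) (fun x => (hab τ x).2)
    (hg.comp (measurable_glue_left Λ τ)) (fun x => hgb _)

lemma gibbsExp_const_sub (Λ : Finset (Vtx d)) (τ : Vtx d → S) {g : (Vtx d → S) → ℝ}
    (hg : Measurable g) {c : ℝ} (hgb : ∀ σ, |g σ| ≤ c) (c₀ : ℝ) :
    gibbsExp κ H f β lam η Λ τ (fun σ => c₀ - g σ)
      = c₀ - gibbsExp κ H f β lam η Λ τ g := by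
  obtain ⟨a, b, ha, hab⟩ := Wt_bdd H f β lam η hHbdd hfbdd Λ
  rw [gibbsExp_eq_avg, gibbsExp_eq_avg]
  exact avg_const_sub _ (Wt_meas H f β lam η hHmeas hfmeas Λ τ) ha
    (fun x => (hab τ x).1) (fun x => (hab τ x).2)
    (hg.comp (measurable_glue_left Λ τ)) (fun x => hgb _)

lemma gibbsExp_sum {ι : Type*} (s : Finset ι) (Λ : Finset (Vtx d)) (τ : Vtx d → S)
    (g : ι → (Vtx d → S) → ℝ) (hg : ∀ j ∈ s, Measurable (g j)) (c : ι → ℝ)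
    (hgb : ∀ j ∈ s, ∀ σ, |g j σ| ≤ c j) :
    gibbsExp κ H f β lam η Λ τ (fun σ => ∑ j ∈ s, g j σ)
      = ∑ j ∈ s, gibbsExp κ H f β lam η Λ τ (g j) := by
  obtain ⟨a, b, ha, hab⟩ := Wt_bdd H f β lam η hHbdd hfbdd Λ
  simp only [gibbsExp_eq_avg]
  exact avg_sum _ (Wt_meas H f β lam η hHmeas hfmeas Λ τ) ha
    (fun x => (hab τ x).1) (fun x => (hab τ x).2) s _
    (fun j hj => (hg j hj).comp (measurable_glue_left Λ τ)) c (fun j hj x => hgb j hj _)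

lemma gibbsExp_jensen (Λ : Finset (Vtx d)) (τ : Vtx d → S) (F : (Vtx d → S) → Fin m → ℝ)
    {c : ℝ} (hc : 0 ≤ c) (hFm : ∀ i, Measurable (fun σ => F σ i))
    (hFb : ∀ σ, euclNorm (F σ) ≤ c) :
    euclNorm (fun i => gibbsExp κ H f β lam η Λ τ (fun σ => F σ i)) ≤ c := by
  obtain ⟨a, b, ha, hab⟩ := Wt_bdd H f β lam η hHbdd hfbdd Λ
  simp only [gibbsExp_eq_avg]
  exact avg_jensen _ (Wt_meas H f β lam η hHmeas hfmeas Λ τ) ha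
    (fun x => (hab τ x).1) (fun x => (hab τ x).2) _ hc
    (fun i => (hFm i).comp (measurable_glue_left Λ τ)) (fun x => hFb _)

omit hHbdd hfbdd in
lemma gibbsExp_measurable_bc (Λ : Finset (Vtx d)) {g : (Vtx d → S) → ℝ}
    (hg : Measurable g) :
    Measurable (fun τ => gibbsExp κ H f β lam η Λ τ g) := by
  have hglue := measurable_glue (S := S) Λ
  have hnum : Measurable (fun τ : Vtx d → S => ∫ σΛ : ∀ _ : Λ, S,
      g (glue Λ σΛ τ) * Real.exp (-β * disH H f lam η Λ (glue Λ σΛ τ))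
        ∂Measure.pi fun _ => κ) := by
    have hjm : StronglyMeasurable (fun p : (Vtx d → S) × (∀ _ : Λ, S) =>
        g (glue Λ p.2 p.1) * Real.exp (-β * disH H f lam η Λ (glue Λ p.2 p.1))) :=
      (((hg.comp hglue).mul (Real.measurable_exp.comp (measurable_const.mul
        ((measurable_disH H f hHmeas hfmeas lam η Λ).comp hglue))))).stronglyMeasurable
    exact hjm.integral_prod_right'.measurable
  have hden : Measurable (fun τ : Vtx d → S => ∫ σΛ : ∀ _ : Λ, S,
      Real.exp (-β * disH H f lam η Λ (glue Λ σΛ τ)) ∂Measure.pi fun _ => κ) := by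
    have hjm : StronglyMeasurable (fun p : (Vtx d → S) × (∀ _ : Λ, S) =>
        Real.exp (-β * disH H f lam η Λ (glue Λ p.2 p.1))) :=
      (Real.measurable_exp.comp (measurable_const.mul
        ((measurable_disH H f hHmeas hfmeas lam η Λ).comp hglue))).stronglyMeasurable
    exact hjm.integral_prod_right'.measurable
  exact hnum.div hden

end GibbsL
section Main
variable {d : ℕ} {S : Type} [MeasurableSpace S] {m : ℕ}
variable (κ : Measure S) [IsProbabilityMeasure κ]
variable (H : Finset (Vtx d) → (Vtx d → S) → ℝ) (f : Vtx d → (Vtx d → S) → Fin m → ℝ)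
variable (β lam : ℝ) (η : Vtx d → Fin m → ℝ)
variable (hHmeas : ∀ Λ, Measurable (H Λ)) (hHbdd : ∀ Λ, ∃ C, ∀ σ, |H Λ σ| ≤ C)
  (hfmeas : ∀ v i, Measurable fun σ => f v σ i) (hfbdd : ∀ v σ, euclNorm (f v σ) ≤ 1)

omit [IsProbabilityMeasure κ] in
lemma nonempty_of_prob (hP : IsProbabilityMeasure κ) : Nonempty S := by
  by_contra h
  rw [not_nonempty_iff] at h
  have h1 : κ Set.univ = 1 := measure_univ
  rw [Set.univ_eq_empty_iff.mpr h, measure_empty] at h1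
  exact zero_ne_one h1

include hHmeas hHbdd hfmeas hfbdd

omit hHbdd hfbdd in
lemma T_meas (Λj : Finset (Vtx d)) (i : Fin m) :
    Measurable (fun σ => ∑ v ∈ Λj, gibbsExp κ H f β lam η Λj σ (fun σ' => f v σ' i)) :=
  Finset.measurable_sum _ fun v _ =>
    gibbsExp_measurable_bc κ H f β lam η hHmeas hfmeas Λj (hfmeas v i)

omit hHmeas hHbdd hfmeas hfbdd in
lemma T_meas' (hHmeas : ∀ Λ, Measurable (H Λ)) (hfmeas : ∀ v i, Measurable fun σ => f v σ i)
    (Λj : Finset (Vtx d)) (i : Fin m) :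
    Measurable (fun σ => ∑ v ∈ Λj, gibbsExp κ H f β lam η Λj σ (fun σ' => f v σ' i)) :=
  Finset.measurable_sum _ fun v _ =>
    gibbsExp_measurable_bc κ H f β lam η hHmeas hfmeas Λj (hfmeas v i)

lemma gibbs_f_abs_le (Λ : Finset (Vtx d)) (τ : Vtx d → S) (v : Vtx d) (i : Fin m) :
    |gibbsExp κ H f β lam η Λ τ (fun σ => f v σ i)| ≤ 1 :=
  gibbsExp_abs_le κ H f β lam η hHmeas hHbdd hfmeas hfbdd Λ τ (hfmeas v i)
    (fun σ => abs_f_le f hfbdd v σ i)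

lemma T_abs (Λj : Finset (Vtx d)) (i : Fin m) (σ : Vtx d → S) :
    |∑ v ∈ Λj, gibbsExp κ H f β lam η Λj σ (fun σ' => f v σ' i)| ≤ (Λj.card : ℝ) := by
  refine le_trans (Finset.abs_sum_le_sum_abs _ _) ?_
  calc ∑ v ∈ Λj, |gibbsExp κ H f β lam η Λj σ (fun σ' => f v σ' i)|
      ≤ ∑ _v ∈ Λj, (1:ℝ) := Finset.sum_le_sum fun v _ =>
        gibbs_f_abs_le κ H f β lam η hHmeas hHbdd hfmeas hfbdd Λj σ v i
    _ = (Λj.card : ℝ) := by simp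

/-- Bound on the entries of the `Fluc` supremand. -/
lemma fluc_body_le (Λj : Finset (Vtx d)) (τ₁ τ₂ : Vtx d → S) :
    euclNorm (fun i => ((Λj.card : ℝ))⁻¹ *
      ∑ v ∈ Λj, (gibbsExp κ H f β lam η Λj τ₁ (fun σ => f v σ i)
        - gibbsExp κ H f β lam η Λj τ₂ (fun σ => f v σ i))) ≤ Real.sqrt m * 2 := by
  refine euclNorm_le_of_abs_le fun i => ?_
  rw [abs_mul, abs_inv, Nat.abs_cast]
  have h1 : |∑ v ∈ Λj, (gibbsExp κ H f β lam η Λj τ₁ (fun σ => f v σ i)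
      - gibbsExp κ H f β lam η Λj τ₂ (fun σ => f v σ i))| ≤ (Λj.card : ℝ) * 2 := by
    refine le_trans (Finset.abs_sum_le_sum_abs _ _) ?_
    calc ∑ v ∈ Λj, |gibbsExp κ H f β lam η Λj τ₁ (fun σ => f v σ i)
          - gibbsExp κ H f β lam η Λj τ₂ (fun σ => f v σ i)|
        ≤ ∑ _v ∈ Λj, (2:ℝ) := Finset.sum_le_sum fun v _ => by
          refine le_trans (abs_sub _ _) ?_
          have := gibbs_f_abs_le κ H f β lam η hHmeas hHbdd hfmeas hfbdd Λj τ₁ v i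
          have := gibbs_f_abs_le κ H f β lam η hHmeas hHbdd hfmeas hfbdd Λj τ₂ v i
          linarith
      _ = (Λj.card : ℝ) * 2 := by simp [mul_comm]
  calc ((Λj.card : ℝ))⁻¹ * |_| ≤ ((Λj.card : ℝ))⁻¹ * ((Λj.card : ℝ) * 2) :=
        mul_le_mul_of_nonneg_left h1 (inv_nonneg.mpr (Nat.cast_nonneg _))
    _ = ((Λj.card : ℝ)⁻¹ * (Λj.card : ℝ)) * 2 := by ring
    _ ≤ 1 * 2 := by
        rcases eq_or_ne ((Λj.card : ℝ)) 0 with h | h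
        · simp [h]
        · rw [inv_mul_cancel₀ h]
    _ = 2 := one_mul 2

lemma Fluc_nonneg (hS : Nonempty S) (Λj : Finset (Vtx d)) :
    0 ≤ Fluc κ H f β lam Λj η := by
  obtain ⟨s0⟩ := hS
  haveI : Nonempty (Vtx d → S) := ⟨fun _ => s0⟩
  set τ0 : Vtx d → S := fun _ => s0
  have h0 : euclNorm (fun i => ((Λj.card : ℝ))⁻¹ *
      ∑ v ∈ Λj, (gibbsExp κ H f β lam η Λj τ0 (fun σ => f v σ i)
        - gibbsExp κ H f β lam η Λj τ0 (fun σ => f v σ i))) = 0 := by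
    simp [euclNorm]
  have hb1 : ∀ τ₁ : Vtx d → S, BddAbove (Set.range fun τ₂ =>
      euclNorm (fun i => ((Λj.card : ℝ))⁻¹ *
        ∑ v ∈ Λj, (gibbsExp κ H f β lam η Λj τ₁ (fun σ => f v σ i)
          - gibbsExp κ H f β lam η Λj τ₂ (fun σ => f v σ i)))) := by
    intro τ₁
    refine ⟨Real.sqrt m * 2, ?_⟩
    rintro x ⟨τ₂, rfl⟩
    exact fluc_body_le κ H f β lam η hHmeas hHbdd hfmeas hfbdd Λj τ₁ τ₂
  have hb2 : BddAbove (Set.range fun τ₁ : Vtx d → S => ⨆ τ₂ : Vtx d → S,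
      euclNorm (fun i => ((Λj.card : ℝ))⁻¹ *
        ∑ v ∈ Λj, (gibbsExp κ H f β lam η Λj τ₁ (fun σ => f v σ i)
          - gibbsExp κ H f β lam η Λj τ₂ (fun σ => f v σ i)))) := by
    refine ⟨Real.sqrt m * 2, ?_⟩
    rintro x ⟨τ₁, rfl⟩
    exact ciSup_le fun τ₂ => fluc_body_le κ H f β lam η hHmeas hHbdd hfmeas hfbdd Λj τ₁ τ₂
  unfold Fluc
  exact le_trans (le_trans (le_of_eq h0.symm) (le_ciSup (hb1 τ0) τ0)) (le_ciSup hb2 τ0)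

/-- The key two-boundary-condition estimate on the unnormalized local sums. -/
lemma Tdiff_le (hS : Nonempty S) (Λj : Finset (Vtx d)) (σ σ' : Vtx d → S) :
    euclNorm (fun i => (∑ v ∈ Λj, gibbsExp κ H f β lam η Λj σ (fun σ'' => f v σ'' i))
        - ∑ v ∈ Λj, gibbsExp κ H f β lam η Λj σ' (fun σ'' => f v σ'' i))
      ≤ (Λj.card : ℝ) * Fluc κ H f β lam Λj η := by
  haveI : Nonempty (Vtx d → S) := ⟨fun _ => hS.some⟩
  have hsub : ∀ i, (∑ v ∈ Λj, gibbsExp κ H f β lam η Λj σ (fun σ'' => f v σ'' i))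
      - ∑ v ∈ Λj, gibbsExp κ H f β lam η Λj σ' (fun σ'' => f v σ'' i)
      = ∑ v ∈ Λj, (gibbsExp κ H f β lam η Λj σ (fun σ'' => f v σ'' i)
        - gibbsExp κ H f β lam η Λj σ' (fun σ'' => f v σ'' i)) := fun i =>
    (Finset.sum_sub_distrib _ _).symm
  rcases eq_or_ne Λj.card 0 with hc | hc
  · rw [Finset.card_eq_zero] at hc
    subst hc
    simp [euclNorm]
  · have hcpos : (0:ℝ) < (Λj.card : ℝ) := by
      exact_mod_cast Nat.pos_of_ne_zero hc
    -- the Fluc supremand at (σ, σ')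
    have hk : euclNorm (fun i => ((Λj.card : ℝ))⁻¹ *
        ∑ v ∈ Λj, (gibbsExp κ H f β lam η Λj σ (fun σ'' => f v σ'' i)
          - gibbsExp κ H f β lam η Λj σ' (fun σ'' => f v σ'' i)))
        ≤ Fluc κ H f β lam Λj η := by
      have hb1 : ∀ τ₁ : Vtx d → S, BddAbove (Set.range fun τ₂ =>
          euclNorm (fun i => ((Λj.card : ℝ))⁻¹ *
            ∑ v ∈ Λj, (gibbsExp κ H f β lam η Λj τ₁ (fun σ'' => f v σ'' i)
              - gibbsExp κ H f β lam η Λj τ₂ (fun σ'' => f v σ'' i)))) := by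
        intro τ₁
        refine ⟨Real.sqrt m * 2, ?_⟩
        rintro x ⟨τ₂, rfl⟩
        exact fluc_body_le κ H f β lam η hHmeas hHbdd hfmeas hfbdd Λj τ₁ τ₂
      have hb2 : BddAbove (Set.range fun τ₁ : Vtx d → S => ⨆ τ₂ : Vtx d → S,
          euclNorm (fun i => ((Λj.card : ℝ))⁻¹ *
            ∑ v ∈ Λj, (gibbsExp κ H f β lam η Λj τ₁ (fun σ'' => f v σ'' i)
              - gibbsExp κ H f β lam η Λj τ₂ (fun σ'' => f v σ'' i)))) := by
        refine ⟨Real.sqrt m * 2, ?_⟩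
        rintro x ⟨τ₁, rfl⟩
        exact ciSup_le fun τ₂ => fluc_body_le κ H f β lam η hHmeas hHbdd hfmeas hfbdd Λj τ₁ τ₂
      unfold Fluc
      exact le_trans (le_ciSup (hb1 σ) σ') (le_ciSup hb2 σ)
    have heq : euclNorm (fun i => (∑ v ∈ Λj, gibbsExp κ H f β lam η Λj σ (fun σ'' => f v σ'' i))
        - ∑ v ∈ Λj, gibbsExp κ H f β lam η Λj σ' (fun σ'' => f v σ'' i))
        = (Λj.card : ℝ) * euclNorm (fun i => ((Λj.card : ℝ))⁻¹ *
          ∑ v ∈ Λj, (gibbsExp κ H f β lam η Λj σ (fun σ'' => f v σ'' i)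
            - gibbsExp κ H f β lam η Λj σ' (fun σ'' => f v σ'' i))) := by
      rw [euclNorm_smul, abs_inv, Nat.abs_cast, ← mul_assoc,
        mul_inv_cancel₀ (ne_of_gt hcpos), one_mul]
      congr 1
      funext i
      exact hsub i
    rw [heq]
    exact mul_le_mul_of_nonneg_left hk (le_of_lt hcpos)

/-- Double Jensen: difference of two boundary conditions on the big volume. -/
lemma Ddiff_le (hS : Nonempty S) (Λj Λ' : Finset (Vtx d)) (τ₁ τ₂ : Vtx d → S) :
    euclNorm (fun i =>
        gibbsExp κ H f β lam η Λ' τ₁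
          (fun σ => ∑ v ∈ Λj, gibbsExp κ H f β lam η Λj σ (fun σ'' => f v σ'' i))
        - gibbsExp κ H f β lam η Λ' τ₂
          (fun σ => ∑ v ∈ Λj, gibbsExp κ H f β lam η Λj σ (fun σ'' => f v σ'' i)))
      ≤ (Λj.card : ℝ) * Fluc κ H f β lam Λj η := by
  haveI : Nonempty (Vtx d → S) := ⟨fun _ => hS.some⟩
  set T : (Vtx d → S) → Fin m → ℝ :=
    fun σ i => ∑ v ∈ Λj, gibbsExp κ H f β lam η Λj σ (fun σ'' => f v σ'' i) with hT
  have hc : 0 ≤ (Λj.card : ℝ) * Fluc κ H f β lam Λj η :=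
    mul_nonneg (Nat.cast_nonneg _) (Fluc_nonneg κ H f β lam η hHmeas hHbdd hfmeas hfbdd hS Λj)
  have hTm : ∀ i, Measurable (fun σ => T σ i) := fun i =>
    T_meas κ H f β lam η hHmeas hfmeas Λj i
  have hTb : ∀ i σ, |T σ i| ≤ (Λj.card : ℝ) := fun i σ =>
    T_abs κ H f β lam η hHmeas hHbdd hfmeas hfbdd Λj i σ
  have stepA : ∀ σ, euclNorm
      (fun i => T σ i - gibbsExp κ H f β lam η Λ' τ₂ (fun σ' => T σ' i))
      ≤ (Λj.card : ℝ) * Fluc κ H f β lam Λj η := by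
    intro σ
    have he : (fun i => T σ i - gibbsExp κ H f β lam η Λ' τ₂ (fun σ' => T σ' i))
        = fun i => gibbsExp κ H f β lam η Λ' τ₂ (fun σ' => T σ i - T σ' i) := by
      funext i
      exact (gibbsExp_const_sub κ H f β lam η hHmeas hHbdd hfmeas hfbdd Λ' τ₂
        (hTm i) (hTb i) (T σ i)).symm
    rw [he]
    exact gibbsExp_jensen κ H f β lam η hHmeas hHbdd hfmeas hfbdd Λ' τ₂
      (fun σ' i => T σ i - T σ' i) hc (fun i => measurable_const.sub (hTm i))
      (fun σ' => Tdiff_le κ H f β lam η hHmeas hHbdd hfmeas hfbdd hS Λj σ σ')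
  have stepB : (fun i => gibbsExp κ H f β lam η Λ' τ₁ (fun σ => T σ i)
        - gibbsExp κ H f β lam η Λ' τ₂ (fun σ => T σ i))
      = fun i => gibbsExp κ H f β lam η Λ' τ₁
        (fun σ => T σ i - gibbsExp κ H f β lam η Λ' τ₂ (fun σ' => T σ' i)) := by
    funext i
    rw [gibbsExp_sub_const κ H f β lam η hHmeas hHbdd hfmeas hfbdd Λ' τ₁ (hTm i) (hTb i) _]
  rw [show (fun i =>
        gibbsExp κ H f β lam η Λ' τ₁ (fun σ => T σ i)
        - gibbsExp κ H f β lam η Λ' τ₂ (fun σ => T σ i)) = _ from stepB]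
  exact gibbsExp_jensen κ H f β lam η hHmeas hHbdd hfmeas hfbdd Λ' τ₁
    (fun σ i => T σ i - gibbsExp κ H f β lam η Λ' τ₂ (fun σ' => T σ' i)) hc
    (fun i => (hTm i).sub measurable_const) stepA

/-- Consistency rewriting of a local sum of one-site expectations. -/
lemma sum_restrict
    (hcons : ∀ (η : Vtx d → Fin m → ℝ) (Λ' Λ : Finset (Vtx d)), Λ' ⊆ Λ →
      ∀ (τ₀ : Vtx d → S) (g : (Vtx d → S) → ℝ), Measurable g → (∃ Cg, ∀ σ, |g σ| ≤ Cg) →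
      gibbsExp κ H f β lam η Λ τ₀ (fun σ => gibbsExp κ H f β lam η Λ' σ g)
        = gibbsExp κ H f β lam η Λ τ₀ g)
    (Λj Λ' : Finset (Vtx d)) (hsub : Λj ⊆ Λ') (τ : Vtx d → S) (i : Fin m) :
    ∑ v ∈ Λj, gibbsExp κ H f β lam η Λ' τ (fun σ => f v σ i)
      = gibbsExp κ H f β lam η Λ' τ
        (fun σ => ∑ v ∈ Λj, gibbsExp κ H f β lam η Λj σ (fun σ' => f v σ' i)) := by
  rw [gibbsExp_sum κ H f β lam η hHmeas hHbdd hfmeas hfbdd Λj Λ' τ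
      (fun v σ => gibbsExp κ H f β lam η Λj σ (fun σ' => f v σ' i))
      (fun v _ => gibbsExp_measurable_bc κ H f β lam η hHmeas hfmeas Λj (hfmeas v i))
      (fun _ => (1:ℝ))
      (fun v _ σ => gibbs_f_abs_le κ H f β lam η hHmeas hHbdd hfmeas hfbdd Λj σ v i)]
  refine Finset.sum_congr rfl fun v hv => ?_
  exact (hcons η Λj Λ' hsub τ (fun σ => f v σ i) (hfmeas v i)
    ⟨1, fun σ => abs_f_le f hfbdd v σ i⟩).symm

end Main
/-- Proposition (domain subadditivity property). -/
theorem domain_subadditivity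
    {d : ℕ} (hd : 1 ≤ d)
    (κ : Measure S) [IsProbabilityMeasure κ]
    (m R : ℕ) (hm : 1 ≤ m)
    (H : Finset (Vtx d) → (Vtx d → S) → ℝ)
    (hHmeas : ∀ Λ, Measurable (H Λ))
    (hHbdd : ∀ Λ, ∃ C, ∀ σ, |H Λ σ| ≤ C)
    (C_H : ℝ) (hCH : 0 ≤ C_H)
    (hbbe : ∀ (Λ : Finset (Vtx d)) (σ σ' : Vtx d → S), (∀ v ∈ Λ, σ v = σ' v) →
      |H Λ σ - H Λ σ'| ≤ C_H * (extBdry Λ).ncard / Λ.card)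
    (f : Vtx d → (Vtx d → S) → Fin m → ℝ)
    (hfmeas : ∀ v i, Measurable fun σ => f v σ i)
    (hfbdd : ∀ v σ, euclNorm (f v σ) ≤ 1)
    (hfloc : ∀ (v : Vtx d) (σ σ' : Vtx d → S),
      (∀ w : Vtx d, (∀ i, |w i - v i| ≤ (R : ℤ)) → σ w = σ' w) → f v σ = f v σ')
    (β lam : ℝ) (hβ : 0 < β) (hlam : 0 < lam)
    (hcons : ∀ (η : Vtx d → Fin m → ℝ) (Λ' Λ : Finset (Vtx d)), Λ' ⊆ Λ →
      ∀ (τ₀ : Vtx d → S) (g : (Vtx d → S) → ℝ), Measurable g → (∃ Cg, ∀ σ, |g σ| ≤ Cg) →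
      gibbsExp κ H f β lam η Λ τ₀ (fun σ => gibbsExp κ H f β lam η Λ' σ g)
        = gibbsExp κ H f β lam η Λ τ₀ g)
    (η : Vtx d → Fin m → ℝ)
    (N : ℕ) (Λs : Fin N → Finset (Vtx d))
    (hdisj : ∀ j k, j ≠ k → Disjoint (Λs j) (Λs k)) :
    (Fluc κ H f β lam (Finset.univ.biUnion Λs) η ≤
        ∑ j, ((Λs j).card : ℝ) / ((Finset.univ.biUnion Λs).card : ℝ) *
          Fluc κ H f β lam (Λs j) η) ∧
    (∀ i : Fin m,
      (⨆ τ : Vtx d → S, ∑ v ∈ Finset.univ.biUnion Λs,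
          gibbsExp κ H f β lam η (Finset.univ.biUnion Λs) τ (fun σ => f v σ i)) ≤
        ∑ j, ⨆ τ : Vtx d → S, ∑ v ∈ Λs j,
          gibbsExp κ H f β lam η (Λs j) τ (fun σ => f v σ i)) ∧
    (∀ i : Fin m,
      (⨅ τ : Vtx d → S, ∑ v ∈ Finset.univ.biUnion Λs,
          gibbsExp κ H f β lam η (Finset.univ.biUnion Λs) τ (fun σ => f v σ i)) ≥
        ∑ j, ⨅ τ : Vtx d → S, ∑ v ∈ Λs j,
          gibbsExp κ H f β lam η (Λs j) τ (fun σ => f v σ i)) := by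
  have hS : Nonempty S := nonempty_of_prob κ inferInstance
  haveI hNe : Nonempty (Vtx d → S) := ⟨fun _ => hS.some⟩
  set Λ' := Finset.univ.biUnion Λs with hΛ'
  have hpd : (↑(Finset.univ : Finset (Fin N)) : Set (Fin N)).PairwiseDisjoint Λs :=
    fun a _ b _ hab => hdisj a b hab
  have hsub : ∀ j, Λs j ⊆ Λ' := fun j => Finset.subset_biUnion_of_mem Λs (Finset.mem_univ j)
  have hsplit : ∀ g : Vtx d → ℝ, ∑ v ∈ Λ', g v = ∑ j, ∑ v ∈ Λs j, g v :=
    fun g => Finset.sum_biUnion hpd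
  refine ⟨?_, ?_, ?_⟩
  · -- part (i)
    rw [Fluc]
    refine ciSup_le fun τ₁ => ciSup_le fun τ₂ => ?_
    have hrw : (fun i => ((Λ'.card : ℝ))⁻¹ *
        ∑ v ∈ Λ', (gibbsExp κ H f β lam η Λ' τ₁ (fun σ => f v σ i)
          - gibbsExp κ H f β lam η Λ' τ₂ (fun σ => f v σ i)))
        = fun i => ∑ j, ((Λ'.card : ℝ))⁻¹ *
          (gibbsExp κ H f β lam η Λ' τ₁
            (fun σ => ∑ v ∈ Λs j, gibbsExp κ H f β lam η (Λs j) σ (fun σ'' => f v σ'' i))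
          - gibbsExp κ H f β lam η Λ' τ₂
            (fun σ => ∑ v ∈ Λs j, gibbsExp κ H f β lam η (Λs j) σ (fun σ'' => f v σ'' i))) := by
      funext i
      rw [hsplit (fun v => gibbsExp κ H f β lam η Λ' τ₁ (fun σ => f v σ i)
        - gibbsExp κ H f β lam η Λ' τ₂ (fun σ => f v σ i)), Finset.mul_sum]
      refine Finset.sum_congr rfl fun j _ => ?_
      congr 1
      rw [Finset.sum_sub_distrib,
        sum_restrict κ H f β lam η hHmeas hHbdd hfmeas hfbdd hcons (Λs j) Λ' (hsub j) τ₁ i,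
        sum_restrict κ H f β lam η hHmeas hHbdd hfmeas hfbdd hcons (Λs j) Λ' (hsub j) τ₂ i]
    rw [hrw]
    refine le_trans (euclNorm_sum_le Finset.univ fun j i => ((Λ'.card : ℝ))⁻¹ *
      (gibbsExp κ H f β lam η Λ' τ₁
        (fun σ => ∑ v ∈ Λs j, gibbsExp κ H f β lam η (Λs j) σ (fun σ'' => f v σ'' i))
      - gibbsExp κ H f β lam η Λ' τ₂
        (fun σ => ∑ v ∈ Λs j, gibbsExp κ H f β lam η (Λs j) σ (fun σ'' => f v σ'' i)))) ?_
    refine Finset.sum_le_sum fun j _ => ?_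
    rw [euclNorm_smul, abs_inv, Nat.abs_cast]
    calc ((Λ'.card : ℝ))⁻¹ * euclNorm (fun i =>
          gibbsExp κ H f β lam η Λ' τ₁
            (fun σ => ∑ v ∈ Λs j, gibbsExp κ H f β lam η (Λs j) σ (fun σ'' => f v σ'' i))
          - gibbsExp κ H f β lam η Λ' τ₂
            (fun σ => ∑ v ∈ Λs j, gibbsExp κ H f β lam η (Λs j) σ (fun σ'' => f v σ'' i)))
        ≤ ((Λ'.card : ℝ))⁻¹ * (((Λs j).card : ℝ) * Fluc κ H f β lam (Λs j) η) :=
          mul_le_mul_of_nonneg_left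
            (Ddiff_le κ H f β lam η hHmeas hHbdd hfmeas hfbdd hS (Λs j) Λ' τ₁ τ₂)
            (inv_nonneg.mpr (Nat.cast_nonneg _))
      _ = ((Λs j).card : ℝ) / (Λ'.card : ℝ) * Fluc κ H f β lam (Λs j) η := by
          rw [div_eq_mul_inv]; ring
  · -- part (ii)
    intro i
    refine ciSup_le fun τ => ?_
    rw [hsplit (fun v => gibbsExp κ H f β lam η Λ' τ (fun σ => f v σ i))]
    refine Finset.sum_le_sum fun j _ => ?_
    rw [sum_restrict κ H f β lam η hHmeas hHbdd hfmeas hfbdd hcons (Λs j) Λ' (hsub j) τ i]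
    have hb : BddAbove (Set.range fun τ' : Vtx d → S =>
        ∑ v ∈ Λs j, gibbsExp κ H f β lam η (Λs j) τ' (fun σ => f v σ i)) := by
      refine ⟨((Λs j).card : ℝ), ?_⟩
      rintro x ⟨τ', rfl⟩
      exact le_of_abs_le (T_abs κ H f β lam η hHmeas hHbdd hfmeas hfbdd (Λs j) i τ')
    exact gibbsExp_le_of_le κ H f β lam η hHmeas hHbdd hfmeas hfbdd Λ' τ
      (T_meas' κ H f β lam η hHmeas hfmeas (Λs j) i)
      (fun σ => T_abs κ H f β lam η hHmeas hHbdd hfmeas hfbdd (Λs j) i σ)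
      (fun σ => le_ciSup hb σ)
  · -- part (iii)
    intro i
    refine le_ciInf fun τ => ?_
    rw [hsplit (fun v => gibbsExp κ H f β lam η Λ' τ (fun σ => f v σ i))]
    refine Finset.sum_le_sum fun j _ => ?_
    rw [sum_restrict κ H f β lam η hHmeas hHbdd hfmeas hfbdd hcons (Λs j) Λ' (hsub j) τ i]
    have hb : BddBelow (Set.range fun τ' : Vtx d → S =>
        ∑ v ∈ Λs j, gibbsExp κ H f β lam η (Λs j) τ' (fun σ => f v σ i)) := by
      refine ⟨-((Λs j).card : ℝ), ?_⟩
      rintro x ⟨τ', rfl⟩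
      exact neg_le_of_abs_le (T_abs κ H f β lam η hHmeas hHbdd hfmeas hfbdd (Λs j) i τ')
    exact le_gibbsExp_of_le κ H f β lam η hHmeas hHbdd hfmeas hfbdd Λ' τ
      (T_meas' κ H f β lam η hHmeas hfmeas (Λs j) i)
      (fun σ => T_abs κ H f β lam η hHmeas hHbdd hfmeas hfbdd (Λs j) i σ)
      (fun σ => ciInf_le hb σ)

end
end

section
/- There exists a numerical constant C > 0 with the following property. Let λ > 0, let g : ℝ → ℝ be a convex, λ-Lipschitz and differentiable function, and let r, δ > 0. Then the Lebesgue measure of the set Stab(λ,δ,r,g) is at most C λ r / δ². -/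
open MeasureTheory

/-- The set `N_{λ,r}(g)` of convex, `λ`-Lipschitz, differentiable functions uniformly
`r`-close to `g`. -/
def Nset (lam r : ℝ) (g : ℝ → ℝ) : Set (ℝ → ℝ) :=
  {g₁ | ConvexOn ℝ Set.univ g₁ ∧ LipschitzWith (Real.toNNReal lam) g₁ ∧
    Differentiable ℝ g₁ ∧ ∀ t : ℝ, |g t - g₁ t| ≤ r}

/-- The `δ`-stability set `Stab(λ,δ,r,g)`. -/
def Stab (lam δ r : ℝ) (g : ℝ → ℝ) : Set ℝ :=
  {t | ∃ g₁ ∈ Nset lam r g, δ < |deriv g₁ t - deriv g t|}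

/-- Proposition (`δ`-stability for `λ`-Lipschitz convex functions): the Lebesgue measure of the
stability set is at most `C λ r / δ²` for a numerical constant `C`. -/
theorem lebesgue_measure_stab_le :
    ∃ C : ℝ, 0 < C ∧
      ∀ (lam : ℝ), 0 < lam →
      ∀ g : ℝ → ℝ, ConvexOn ℝ Set.univ g → LipschitzWith (Real.toNNReal lam) g →
        Differentiable ℝ g →
      ∀ r δ : ℝ, 0 < r → 0 < δ →
        volume (Stab lam δ r g) ≤ ENNReal.ofReal (C * lam * r / δ ^ 2) := by
  refine ⟨32, by norm_num, ?_⟩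
  intro lam hlam g hgc hglip hgdiff r δ hr hδ
  set φ := deriv g with hφdef
  set h : ℝ := 4 * r / δ with hhdef
  have hh : (0:ℝ) < h := by rw [hhdef]; positivity
  have hδh : δ * h = 4 * r := by rw [hhdef]; field_simp
  have hmono : Monotone φ := by
    have := hgc.monotoneOn_deriv (fun x _ => (hgdiff x))
    exact monotoneOn_univ.mp this
  have hφb : ∀ t : ℝ, |φ t| ≤ lam := by
    intro t
    have h1 := norm_deriv_le_of_lipschitz (𝕜 := ℝ) (x₀ := t) hglip
    rw [Real.norm_eq_abs, Real.coe_toNNReal _ hlam.le] at h1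
    exact h1
  set A : Set ℝ := {t : ℝ | δ / 2 ≤ φ (t + h) - φ t} with hAdef
  -- Step 1: Stab ⊆ A ∪ (· - h) ⁻¹' A
  have hsub : Stab lam δ r g ⊆ A ∪ (fun t => t - h) ⁻¹' A := by
    rintro t ⟨g₁, hg₁, hδt⟩
    rw [← hφdef] at hδt
    obtain ⟨hc1, _hl1, hd1, hclose⟩ := hg₁
    rcases lt_abs.mp hδt with hcase | hcase
    · -- δ < deriv g₁ t - φ t
      left
      have hlt : t < t + h := by linarith
      have k1 : deriv g₁ t ≤ slope g₁ t (t + h) :=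
        hc1.deriv_le_slope (Set.mem_univ t) (Set.mem_univ _) hlt (hd1 t)
      have k2 : slope g t (t + h) ≤ φ (t + h) :=
        hgc.slope_le_deriv (Set.mem_univ t) (Set.mem_univ _) hlt (hgdiff (t + h))
      rw [slope_def_field, add_sub_cancel_left] at k1 k2
      have e1 : deriv g₁ t * h ≤ g₁ (t + h) - g₁ t := (le_div_iff₀ hh).mp k1
      have e2 : g (t + h) - g t ≤ φ (t + h) * h := (div_le_iff₀ hh).mp k2
      have c1 := abs_le.mp (hclose (t + h))
      have c2 := abs_le.mp (hclose t)
      have hcaseh : δ * h < (deriv g₁ t - φ t) * h := by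
        exact mul_lt_mul_of_pos_right hcase hh
      have hmul : δ / 2 * h ≤ (φ (t + h) - φ t) * h := by nlinarith
      exact le_of_mul_le_mul_right hmul hh
    · -- δ < φ t - deriv g₁ t
      right
      show δ / 2 ≤ φ (t - h + h) - φ (t - h)
      rw [sub_add_cancel]
      have hlt : t - h < t := by linarith
      have k1 : φ (t - h) ≤ slope g (t - h) t :=
        hgc.deriv_le_slope (Set.mem_univ _) (Set.mem_univ t) hlt (hgdiff (t - h))
      have k2 : slope g₁ (t - h) t ≤ deriv g₁ t :=
        hc1.slope_le_deriv (Set.mem_univ _) (Set.mem_univ t) hlt (hd1 t)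
      rw [slope_def_field, sub_sub_cancel] at k1 k2
      have e1 : φ (t - h) * h ≤ g t - g (t - h) := (le_div_iff₀ hh).mp k1
      have e2 : g₁ t - g₁ (t - h) ≤ deriv g₁ t * h := (div_le_iff₀ hh).mp k2
      have c1 := abs_le.mp (hclose (t - h))
      have c2 := abs_le.mp (hclose t)
      have hcase' : δ < φ t - deriv g₁ t := by linarith
      have hcaseh : δ * h < (φ t - deriv g₁ t) * h := by
        exact mul_lt_mul_of_pos_right hcase' hh
      have hmul : δ / 2 * h ≤ (φ t - φ (t - h)) * h := by nlinarith
      exact le_of_mul_le_mul_right hmul hh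
  -- measurability of A
  have hm1 : Measurable fun t : ℝ => φ (t + h) :=
    (hmono.comp (monotone_id.add_const h)).measurable
  have hm2 : Measurable φ := hmono.measurable
  have hmeasA : MeasurableSet A :=
    measurableSet_le measurable_const (hm1.sub hm2)
  -- Step 2: measure bound on bounded pieces of A
  have hiφ : ∀ a b : ℝ, IntervalIntegrable φ volume a b := fun a b =>
    hmono.intervalIntegrable
  have hiφh : ∀ a b : ℝ, IntervalIntegrable (fun t => φ (t + h)) volume a b := fun a b =>
    (hmono.comp (monotone_id.add_const h)).intervalIntegrable
  have key : ∀ n : ℕ, volume (A ∩ Set.Ioc (-(n:ℝ)) n) ≤ ENNReal.ofReal (4 * lam * h / δ) := by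
    intro n
    have hn : (-(n:ℝ)) ≤ n := by
      have : (0:ℝ) ≤ n := Nat.cast_nonneg n
      linarith
    set s := A ∩ Set.Ioc (-(n:ℝ)) n with hsdef
    have hsm : MeasurableSet s := hmeasA.inter measurableSet_Ioc
    have hsfin : volume s ≠ ⊤ :=
      ne_of_lt (lt_of_le_of_lt (measure_mono Set.inter_subset_right) measure_Ioc_lt_top)
    set f : ℝ → ℝ := fun t => φ (t + h) - φ t with hfdef
    have hintIoc : IntegrableOn f (Set.Ioc (-(n:ℝ)) n) volume := by
      have i1 := (intervalIntegrable_iff_integrableOn_Ioc_of_le hn).mp (hiφh (-(n:ℝ)) n)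
      have i2 := (intervalIntegrable_iff_integrableOn_Ioc_of_le hn).mp (hiφ (-(n:ℝ)) n)
      exact i1.sub i2
    have hfnonneg : ∀ t : ℝ, 0 ≤ f t := fun t =>
      sub_nonneg.2 (hmono (by linarith : t ≤ t + h))
    -- Markov
    have markov : δ / 2 * (volume s).toReal ≤ ∫ x in s, f x := by
      refine setIntegral_ge_of_const_le_real hsm hsfin (fun x hx => hx.1) ?_
      exact hintIoc.mono_set Set.inter_subset_right
    have mono1 : (∫ x in s, f x) ≤ ∫ x in Set.Ioc (-(n:ℝ)) n, f x := by
      refine setIntegral_mono_set hintIoc (Filter.Eventually.of_forall hfnonneg) ?_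
      exact HasSubset.Subset.eventuallyLE Set.inter_subset_right
    have eq1 : (∫ x in Set.Ioc (-(n:ℝ)) n, f x) = ∫ x in (-(n:ℝ))..n, f x :=
      (intervalIntegral.integral_of_le hn).symm
    have eq2 : (∫ x in (-(n:ℝ))..n, f x)
        = (∫ x in (-(n:ℝ))..n, φ (x + h)) - ∫ x in (-(n:ℝ))..n, φ x :=
      intervalIntegral.integral_sub (hiφh _ _) (hiφ _ _)
    have eq3 : (∫ x in (-(n:ℝ))..n, φ (x + h)) = ∫ x in (-(n:ℝ) + h)..(n + h), φ x :=
      intervalIntegral.integral_comp_add_right φ h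
    have adj1 : (∫ x in (-(n:ℝ))..(-(n:ℝ) + h), φ x) + ∫ x in (-(n:ℝ) + h)..(n + h), φ x
        = ∫ x in (-(n:ℝ))..(n + h), φ x :=
      intervalIntegral.integral_add_adjacent_intervals (hiφ _ _) (hiφ _ _)
    have adj2 : (∫ x in (-(n:ℝ))..n, φ x) + ∫ x in (n:ℝ)..(n + h), φ x
        = ∫ x in (-(n:ℝ))..(n + h), φ x :=
      intervalIntegral.integral_add_adjacent_intervals (hiφ _ _) (hiφ _ _)
    have b1 : (∫ x in (n:ℝ)..(n + h), φ x) ≤ lam * h := by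
      have := intervalIntegral.integral_mono_on (by linarith : (n:ℝ) ≤ n + h)
        (hiφ _ _) (intervalIntegrable_const (c := lam))
        (fun x _ => (abs_le.mp (hφb x)).2)
      simpa [mul_comm] using this
    have b2 : -(lam * h) ≤ ∫ x in (-(n:ℝ))..(-(n:ℝ) + h), φ x := by
      have := intervalIntegral.integral_mono_on (by linarith : (-(n:ℝ)) ≤ -(n:ℝ) + h)
        (intervalIntegrable_const (c := -lam)) (hiφ _ _)
        (fun x _ => (abs_le.mp (hφb x)).1)
      have h2 : (∫ _ in (-(n:ℝ))..(-(n:ℝ) + h), (-lam : ℝ)) = -(lam * h) := by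
        simp [mul_comm]
      linarith [h2 ▸ this]
    have totalbound : (∫ x in Set.Ioc (-(n:ℝ)) n, f x) ≤ 2 * lam * h := by
      rw [eq1, eq2, eq3]
      have : (∫ x in (-(n:ℝ) + h)..(n + h), φ x) - ∫ x in (-(n:ℝ))..n, φ x
          = (∫ x in (n:ℝ)..(n + h), φ x) - ∫ x in (-(n:ℝ))..(-(n:ℝ) + h), φ x := by
        linarith
      rw [this]; linarith
    have htoReal : (volume s).toReal ≤ 4 * lam * h / δ := by
      rw [le_div_iff₀ hδ]
      have := le_trans markov (le_trans mono1 totalbound)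
      linarith
    rw [← ENNReal.ofReal_toReal hsfin]
    exact ENNReal.ofReal_le_ofReal htoReal
  -- Step 3: measure of A
  have hAcover : A = ⋃ n : ℕ, A ∩ Set.Ioc (-(n:ℝ)) n := by
    ext x
    simp only [Set.mem_iUnion, Set.mem_inter_iff, Set.mem_Ioc]
    constructor
    · intro hx
      obtain ⟨n, hn⟩ := exists_nat_gt |x|
      obtain ⟨h1, h2⟩ := abs_lt.mp hn
      exact ⟨n, hx, h1, h2.le⟩
    · rintro ⟨n, hx, _⟩; exact hx
  have hdir : Directed (· ⊆ ·) (fun n : ℕ => A ∩ Set.Ioc (-(n:ℝ)) n) := by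
    refine Monotone.directed_le ?_
    intro m n hmn
    refine Set.inter_subset_inter le_rfl (Set.Ioc_subset_Ioc ?_ ?_)
    · simp only [neg_le_neg_iff, Nat.cast_le]; exact hmn
    · exact_mod_cast hmn
  have hAvol : volume A ≤ ENNReal.ofReal (4 * lam * h / δ) := by
    rw [hAcover, hdir.measure_iUnion]
    exact iSup_le key
  -- Step 4: combine
  have hBvol : volume ((fun t => t - h) ⁻¹' A) = volume A := by
    have : (fun t : ℝ => t - h) = fun t : ℝ => t + (-h) := by
      funext t; ring
    rw [this]
    exact measure_preimage_add_right volume (-h) A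
  calc volume (Stab lam δ r g)
      ≤ volume (A ∪ (fun t => t - h) ⁻¹' A) := measure_mono hsub
    _ ≤ volume A + volume ((fun t => t - h) ⁻¹' A) := measure_union_le _ _
    _ = volume A + volume A := by rw [hBvol]
    _ ≤ ENNReal.ofReal (4 * lam * h / δ) + ENNReal.ofReal (4 * lam * h / δ) :=
        add_le_add hAvol hAvol
    _ = ENNReal.ofReal (4 * lam * h / δ + 4 * lam * h / δ) := by
        rw [ENNReal.ofReal_add (by positivity) (by positivity)]
    _ = ENNReal.ofReal (32 * lam * r / δ ^ 2) := by
        congr 1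
        rw [hhdef]
        field_simp
        ring
end

section
/- There exists a numerical constant C > 0 such that for every λ > 0, every convex, λ-Lipschitz and differentiable function g : ℝ → ℝ, every pair of parameters δ, r > 0, and every variance σ² > 0 with r ≥ σδ²/λ, one has (1/√(2πσ²)) ∫_{Stab(λ,δ,r,g)} e^{−t²/(2σ²)} dt ≤ 1 − exp( −C λ² r² / (σ² δ⁴) ). -/
open MeasureTheory

open Set

lemma stab_subset (lam δ r : ℝ) (g : ℝ → ℝ) (hg : ConvexOn ℝ Set.univ g)
    (hgd : Differentiable ℝ g) (hr : 0 < r) (hδ : 0 < δ) :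
    Stab lam δ r g ⊆ {t : ℝ | δ / 2 ≤ deriv g (t + 4 * r / δ) - deriv g (t - 4 * r / δ)} := by
  set L := 4 * r / δ with hLdef
  have hL : 0 < L := by positivity
  have h2rL : 2 * r / L = δ / 2 := by
    field_simp [hLdef]
    rw [hLdef, div_mul_cancel₀ _ hδ.ne']; ring
  rintro t ⟨g₁, ⟨hc₁, _, hd₁, hcl⟩, hdev⟩
  have hmono : Monotone (deriv g) := by
    have := hg.monotoneOn_deriv (fun x _ => (hgd x))
    exact monotoneOn_univ.mp this
  rcases lt_abs.mp hdev with h | h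
  · -- deriv g₁ t - deriv g t > δ : derivative of g jumps up to the right
    have hslope : deriv g₁ t ≤ slope g₁ t (t + L) :=
      hc₁.deriv_le_slope (Set.mem_univ _) (Set.mem_univ _) (by linarith) (hd₁ t)
    have hslope2 : slope g t (t + L) ≤ deriv g (t + L) :=
      hg.slope_le_deriv (Set.mem_univ _) (Set.mem_univ _) (by linarith) (hgd _)
    have e1 : slope g₁ t (t + L) = (g₁ (t + L) - g₁ t) / L := by
      rw [slope_def_field]; ring_nf
    have e2 : slope g t (t + L) = (g (t + L) - g t) / L := by
      rw [slope_def_field]; ring_nf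
    have c1 := abs_le.mp (hcl (t + L))
    have c2 := abs_le.mp (hcl t)
    have key : slope g₁ t (t + L) - 2 * r / L ≤ slope g t (t + L) := by
      rw [e1, e2]
      rw [div_sub_div_same, div_le_div_iff₀ hL hL]
      nlinarith [c1.1, c1.2, c2.1, c2.2]
    have hm : deriv g (t - L) ≤ deriv g t := hmono (by linarith)
    have : deriv g t + δ / 2 ≤ deriv g (t + L) := by
      rw [← h2rL]
      linarith
    simp only [Set.mem_setOf_eq]
    linarith [h2rL]
  · -- deriv g t - deriv g₁ t > δ
    have hslope : slope g₁ (t - L) t ≤ deriv g₁ t :=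
      hc₁.slope_le_deriv (Set.mem_univ _) (Set.mem_univ _) (by linarith) (hd₁ t)
    have hslope2 : deriv g (t - L) ≤ slope g (t - L) t :=
      hg.deriv_le_slope (Set.mem_univ _) (Set.mem_univ _) (by linarith) (hgd _)
    have e1 : slope g₁ (t - L) t = (g₁ t - g₁ (t - L)) / L := by
      rw [slope_def_field]; ring_nf
    have e2 : slope g (t - L) t = (g t - g (t - L)) / L := by
      rw [slope_def_field]; ring_nf
    have c1 := abs_le.mp (hcl (t - L))
    have c2 := abs_le.mp (hcl t)
    have key : slope g (t - L) t - 2 * r / L ≤ slope g₁ (t - L) t := by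
      rw [e1, e2, div_sub_div_same, div_le_div_iff₀ hL hL]
      nlinarith [c1.1, c1.2, c2.1, c2.2]
    have hm : deriv g t ≤ deriv g (t + L) := hmono (by linarith)
    simp only [Set.mem_setOf_eq]
    linarith [h2rL]

lemma meas_A (φ : ℝ → ℝ) (hmono : Monotone φ) (lam : ℝ) (hφ : ∀ t, |φ t| ≤ lam)
    (L δ : ℝ) (hL : 0 < L) (hδ : 0 < δ) :
    volume {t : ℝ | δ / 2 ≤ φ (t + L) - φ (t - L)} ≤ ENNReal.ofReal (8 * L * lam / δ) := by
  set ψ : ℝ → ℝ := fun t => φ (t + L) - φ (t - L) with hψdef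
  have hψmeas : Measurable ψ :=
    (hmono.measurable.comp (measurable_id.add_const L)).sub
      (hmono.measurable.comp (measurable_id.sub_const L))
  have hψ0 : ∀ t, 0 ≤ ψ t := fun t => sub_nonneg.mpr (hmono (by linarith))
  set A : Set ℝ := {t : ℝ | δ / 2 ≤ ψ t} with hAdef
  have hA : MeasurableSet A := hψmeas measurableSet_Ici
  set M : ℝ := 8 * L * lam / δ with hMdef
  have hlam : 0 ≤ lam := le_trans (abs_nonneg _) (hφ 0)
  have hM : 0 ≤ M := by positivity
  -- bound on every window
  have step : ∀ T : ℝ, 0 ≤ T → volume (A ∩ Ioc (-T) T) ≤ ENNReal.ofReal M := by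
    intro T hT
    have hTT : (-T : ℝ) ≤ T := by linarith
    have m1 : Monotone (fun t : ℝ => φ (t + L)) := fun a b hab => hmono (by linarith)
    have m2 : Monotone (fun t : ℝ => φ (t - L)) := fun a b hab => hmono (by linarith)
    have i1 : IntervalIntegrable (fun t => φ (t + L)) volume (-T) T := m1.intervalIntegrable
    have i2 : IntervalIntegrable (fun t => φ (t - L)) volume (-T) T := m2.intervalIntegrable
    have hψint : IntegrableOn ψ (Ioc (-T) T) := by
      have := (i1.sub i2)
      rwa [intervalIntegrable_iff_integrableOn_Ioc_of_le hTT] at this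
    have hfin : volume (A ∩ Ioc (-T) T) ≠ ⊤ :=
      (lt_of_le_of_lt (measure_mono inter_subset_right) measure_Ioc_lt_top).ne
    have markov : δ / 2 * (volume (A ∩ Ioc (-T) T)).toReal ≤ ∫ t in A ∩ Ioc (-T) T, ψ t :=
      setIntegral_ge_of_const_le_real (hA.inter measurableSet_Ioc) hfin
        (fun x hx => hx.1) (hψint.mono_set inter_subset_right)
    have mono : ∫ t in A ∩ Ioc (-T) T, ψ t ≤ ∫ t in Ioc (-T) T, ψ t :=
      setIntegral_mono_set hψint (Filter.Eventually.of_forall fun t => hψ0 t)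
        (HasSubset.Subset.eventuallyLE inter_subset_right)
    have shift : ∫ t in Ioc (-T) T, ψ t ≤ 4 * L * lam := by
      have e : ∫ t in Ioc (-T) T, ψ t = ∫ t in (-T)..T, ψ t :=
        (intervalIntegral.integral_of_le hTT).symm
      rw [e, hψdef, intervalIntegral.integral_sub i1 i2,
        intervalIntegral.integral_comp_add_right, intervalIntegral.integral_comp_sub_right]
      have jmono : ∀ a b : ℝ, IntervalIntegrable φ volume a b := fun a b =>
        hmono.intervalIntegrable
      have s1 : (∫ t in (-T - L)..(T - L), φ t) + ∫ t in (T - L)..(T + L), φ t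
          = ∫ t in (-T - L)..(T + L), φ t :=
        intervalIntegral.integral_add_adjacent_intervals (jmono _ _) (jmono _ _)
      have s2 : (∫ t in (-T - L)..(-T + L), φ t) + ∫ t in (-T + L)..(T + L), φ t
          = ∫ t in (-T - L)..(T + L), φ t :=
        intervalIntegral.integral_add_adjacent_intervals (jmono _ _) (jmono _ _)
      have b1 : ‖∫ t in (T - L)..(T + L), φ t‖ ≤ lam * |(T + L) - (T - L)| :=
        intervalIntegral.norm_integral_le_of_norm_le_const
          (fun x _ => by rw [Real.norm_eq_abs]; exact hφ x)
      have b2 : ‖∫ t in (-T - L)..(-T + L), φ t‖ ≤ lam * |(-T + L) - (-T - L)| :=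
        intervalIntegral.norm_integral_le_of_norm_le_const
          (fun x _ => by rw [Real.norm_eq_abs]; exact hφ x)
      have habs : |(T + L) - (T - L)| = 2 * L := by rw [abs_of_pos (by linarith)]; ring
      have habs2 : |(-T + L) - (-T - L)| = 2 * L := by rw [abs_of_pos (by linarith)]; ring
      rw [Real.norm_eq_abs, habs] at b1; rw [Real.norm_eq_abs, habs2] at b2
      have hb1 := abs_le.mp b1
      have hb2 := abs_le.mp b2
      nlinarith [hb1.1, hb1.2, hb2.1, hb2.2]
    have : (volume (A ∩ Ioc (-T) T)).toReal ≤ M := by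
      rw [le_div_iff₀ hδ]
      nlinarith [markov, mono, shift]
    exact (ENNReal.le_ofReal_iff_toReal_le hfin hM).mpr this
  -- exhaust ℝ by windows
  have cover : A ⊆ ⋃ n : ℕ, A ∩ Ioc (-(n : ℝ)) n := by
    intro t ht
    refine Set.mem_iUnion.mpr ⟨⌊|t|⌋₊ + 1, ht, ?_, ?_⟩
    · have : |t| < (⌊|t|⌋₊ + 1 : ℝ) := Nat.lt_floor_add_one _
      push_cast
      cases abs_cases t with
      | inl h => nlinarith
      | inr h => nlinarith
    · have : |t| < (⌊|t|⌋₊ + 1 : ℝ) := Nat.lt_floor_add_one _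
      push_cast
      cases abs_cases t with
      | inl h => nlinarith
      | inr h => nlinarith
  have hdir : Directed (· ⊆ ·) (fun n : ℕ => A ∩ Ioc (-(n : ℝ)) n) := by
    have hm : Monotone (fun n : ℕ => A ∩ Ioc (-(n : ℝ)) n) := by
      intro a b hab
      apply inter_subset_inter_right
      apply Ioc_subset_Ioc <;> [skip; exact_mod_cast hab]
      simp only [neg_le_neg_iff]
      exact_mod_cast hab
    exact hm.directed_le
  calc volume A ≤ volume (⋃ n : ℕ, A ∩ Ioc (-(n : ℝ)) n) := measure_mono cover
    _ = ⨆ n : ℕ, volume (A ∩ Ioc (-(n : ℝ)) n) := hdir.measure_iUnion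
    _ ≤ ENNReal.ofReal M := iSup_le fun n => step n (Nat.cast_nonneg n)

lemma aux_exp (lam r δ σ L M T c : ℝ) (hδ : 0 < δ) (hσ : 0 < σ)
    (hLdef : L = 4 * r / δ) (hMdef : M = 8 * L * lam / δ) (hTdef : T = max σ M)
    (hcdef : c = Real.exp (-(2 * T ^ 2 / σ ^ 2)))
    (hE1 : 1 ≤ lam ^ 2 * r ^ 2 / (σ ^ 2 * δ ^ 4)) :
    Real.exp (-(2050 * lam ^ 2 * r ^ 2 / (σ ^ 2 * δ ^ 4))) ≤ c := by
  rw [hcdef]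
  apply Real.exp_le_exp.mpr
  rw [neg_le_neg_iff]
  have hT2 : T ^ 2 ≤ σ ^ 2 + M ^ 2 := by
    rw [hTdef]
    rcases max_cases σ M with ⟨h1, _⟩ | ⟨h1, _⟩ <;> rw [h1] <;>
      nlinarith [sq_nonneg σ, sq_nonneg M]
  have hM2 : M ^ 2 = 1024 * r ^ 2 * lam ^ 2 / δ ^ 4 := by
    rw [hMdef, hLdef]; field_simp; ring
  have hE1' : σ ^ 2 * δ ^ 4 ≤ lam ^ 2 * r ^ 2 := by
    rw [le_div_iff₀ (by positivity)] at hE1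
    linarith
  have hM2σ : M ^ 2 * δ ^ 4 * σ ^ 2 = 1024 * r ^ 2 * lam ^ 2 * σ ^ 2 := by
    rw [hM2]; field_simp
  rw [div_le_div_iff₀ (by positivity) (by positivity)]
  nlinarith [mul_le_mul_of_nonneg_right hT2 (show (0:ℝ) ≤ σ ^ 2 * δ ^ 4 by positivity),
    mul_le_mul_of_nonneg_right hE1' (sq_nonneg σ), hM2σ]

lemma aux_sqrt (σ : ℝ) (hσ : 0 < σ) : Real.sqrt (2 * Real.pi * σ ^ 2) ≤ 3 * σ := by
  have hpi : Real.pi ≤ 4 := Real.pi_le_four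
  have h : Real.sqrt (2 * Real.pi * σ ^ 2) ≤ Real.sqrt (9 * σ ^ 2) :=
    Real.sqrt_le_sqrt (by nlinarith [sq_nonneg σ])
  calc Real.sqrt (2 * Real.pi * σ ^ 2) ≤ Real.sqrt (9 * σ ^ 2) := h
    _ = 3 * σ := by
        rw [show (9 : ℝ) * σ ^ 2 = (3 * σ) ^ 2 by ring, Real.sqrt_sq (by positivity)]

/-- Corollary: the Gaussian measure (variance `σ²`) of the stability set is bounded away
from `1`, quantitatively. -/
theorem gaussian_measure_stab_le :
    ∃ C : ℝ, 0 < C ∧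
      ∀ (lam : ℝ), 0 < lam →
      ∀ g : ℝ → ℝ, ConvexOn ℝ Set.univ g → LipschitzWith (Real.toNNReal lam) g →
        Differentiable ℝ g →
      ∀ r δ σ : ℝ, 0 < r → 0 < δ → 0 < σ → σ * δ ^ 2 / lam ≤ r →
        (∫ t in Stab lam δ r g, Real.exp (-t ^ 2 / (2 * σ ^ 2))) /
            Real.sqrt (2 * Real.pi * σ ^ 2)
          ≤ 1 - Real.exp (-(C * lam ^ 2 * r ^ 2 / (σ ^ 2 * δ ^ 4))) := by
  refine ⟨2050, by norm_num, ?_⟩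
  intro lam hlam g hgc hglip hgd r δ σ hr hδ hσ hrσ
  set f : ℝ → ℝ := fun t => Real.exp (-t ^ 2 / (2 * σ ^ 2)) with hfdef
  clear_value f
  obtain ⟨L, hLdef⟩ : ∃ x : ℝ, x = 4 * r / δ := ⟨_, rfl⟩
  have hL : 0 < L := by rw [hLdef]; positivity
  obtain ⟨M, hMdef⟩ : ∃ x : ℝ, x = 8 * L * lam / δ := ⟨_, rfl⟩
  have hM : 0 < M := by rw [hMdef, hLdef]; positivity
  obtain ⟨T, hTdef⟩ : ∃ x : ℝ, x = max σ M := ⟨_, rfl⟩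
  have hT : 0 < T := by rw [hTdef]; exact lt_of_lt_of_le hσ (le_max_left _ _)
  set A : Set ℝ := {t : ℝ | δ / 2 ≤ deriv g (t + L) - deriv g (t - L)} with hAdef
  clear_value A
  -- basic facts about deriv g
  have hmono : Monotone (deriv g) :=
    monotoneOn_univ.mp (hgc.monotoneOn_deriv (fun x _ => hgd x))
  have hbd : ∀ t, |deriv g t| ≤ lam := by
    intro t
    have := norm_deriv_le_of_lipschitz hglip (x₀ := t)
    rwa [Real.norm_eq_abs, Real.coe_toNNReal _ hlam.le] at this
  have hA : MeasurableSet A := by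
    have h : Measurable fun t : ℝ => deriv g (t + L) - deriv g (t - L) :=
      (hmono.measurable.comp (measurable_id.add_const L)).sub
        (hmono.measurable.comp (measurable_id.sub_const L))
    rw [hAdef]
    exact h measurableSet_Ici
  have hvolA : volume A ≤ ENNReal.ofReal M := by
    rw [hMdef, hAdef]; exact meas_A _ hmono lam hbd L δ hL hδ
  have hsub : Stab lam δ r g ⊆ A := by
    rw [hAdef, hLdef]; exact stab_subset lam δ r g hgc hgd hr hδ
  -- gaussian integrability and total mass
  have hfint : Integrable f := by
    have h : ∀ t : ℝ, -t ^ 2 / (2 * σ ^ 2) = -(1 / (2 * σ ^ 2)) * t ^ 2 := by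
      intro t; field_simp
    rw [hfdef]; simp_rw [h]
    exact integrable_exp_neg_mul_sq (by positivity)
  have hf0 : ∀ t, 0 ≤ f t := by rw [hfdef]; exact fun t => (Real.exp_pos _).le
  obtain ⟨S, hSdef⟩ : ∃ x : ℝ, x = Real.sqrt (2 * Real.pi * σ ^ 2) := ⟨_, rfl⟩
  have hS : 0 < S := by rw [hSdef]; exact Real.sqrt_pos.mpr (by positivity)
  have htot : ∫ t : ℝ, f t = S := by
    have h : ∀ t : ℝ, -t ^ 2 / (2 * σ ^ 2) = -(1 / (2 * σ ^ 2)) * t ^ 2 := by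
      intro t; field_simp
    rw [hfdef]; simp_rw [h]
    rw [integral_gaussian, hSdef]
    congr 1
    field_simp
  -- lower bound on the complement integral
  obtain ⟨c, hcdef⟩ : ∃ x : ℝ, x = Real.exp (-(2 * T ^ 2 / σ ^ 2)) := ⟨_, rfl⟩
  have hc : 0 < c := by rw [hcdef]; exact Real.exp_pos _
  obtain ⟨J, hJdef⟩ : ∃ x : Set ℝ, x = Ioc (-(2 * T)) (2 * T) \ A := ⟨_, rfl⟩
  have hJmeas : MeasurableSet J := by rw [hJdef]; exact measurableSet_Ioc.diff hA
  have hvolIoc : volume (Ioc (-(2 * T)) (2 * T)) = ENNReal.ofReal (4 * T) := by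
    rw [Real.volume_Ioc]; congr 1; ring
  have hMT : M ≤ T := by rw [hTdef]; exact le_max_right _ _
  have hvolJ : ENNReal.ofReal (3 * T) ≤ volume J := by
    have h1 : volume (Ioc (-(2 * T)) (2 * T)) ≤ volume J + volume A := by
      rw [hJdef]
      refine le_trans (measure_mono ?_) (measure_union_le _ _)
      intro x hx
      by_cases h : x ∈ A
      · exact Or.inr h
      · exact Or.inl ⟨hx, h⟩
    have h2 : ENNReal.ofReal (3 * T) + ENNReal.ofReal M ≤ volume J + ENNReal.ofReal M := by
      calc ENNReal.ofReal (3 * T) + ENNReal.ofReal M = ENNReal.ofReal (3 * T + M) := by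
            rw [ENNReal.ofReal_add (by positivity) hM.le]
        _ ≤ ENNReal.ofReal (4 * T) := ENNReal.ofReal_le_ofReal (by linarith)
        _ ≤ volume J + volume A := by rw [← hvolIoc]; exact h1
        _ ≤ volume J + ENNReal.ofReal M := add_le_add_right hvolA _
    exact ENNReal.le_of_add_le_add_right ENNReal.ofReal_ne_top h2
  have hJfin : volume J ≠ ⊤ := by
    rw [hJdef]
    exact (lt_of_le_of_lt (measure_mono diff_subset)
      (by rw [hvolIoc]; exact ENNReal.ofReal_lt_top)).ne
  have hvolJreal : 3 * T ≤ (volume J).toReal := by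
    have := ENNReal.toReal_mono hJfin hvolJ
    rwa [ENNReal.toReal_ofReal (by positivity)] at this
  have hlower : 3 * T * c ≤ ∫ t in Aᶜ, f t := by
    have hcf : ∀ x ∈ J, c ≤ f x := by
      intro x hx
      rw [hJdef] at hx
      have hx1 := hx.1.1
      have hx2 := hx.1.2
      rw [hcdef, hfdef]
      apply Real.exp_le_exp.mpr
      have hx2' : x ^ 2 ≤ 4 * T ^ 2 := by nlinarith
      rw [neg_div]
      apply neg_le_neg
      rw [div_le_div_iff₀ (by positivity) (by positivity)]
      nlinarith
    have h1 : c * (volume J).toReal ≤ ∫ t in J, f t :=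
      setIntegral_ge_of_const_le_real hJmeas hJfin hcf hfint.integrableOn
    have h2 : ∫ t in J, f t ≤ ∫ t in Aᶜ, f t := by
      refine setIntegral_mono_set hfint.integrableOn (Filter.Eventually.of_forall hf0)
        (HasSubset.Subset.eventuallyLE ?_)
      rw [hJdef]
      exact fun x hx => hx.2
    nlinarith [h1, h2, hc.le]
  -- upper bound for the integral over Stab
  have hupper : ∫ t in Stab lam δ r g, f t ≤ S - 3 * T * c := by
    have h1 : ∫ t in Stab lam δ r g, f t ≤ ∫ t in A, f t :=
      setIntegral_mono_set hfint.integrableOn (Filter.Eventually.of_forall hf0)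
        (HasSubset.Subset.eventuallyLE hsub)
    have h2 : (∫ t in A, f t) + ∫ t in Aᶜ, f t = S := by
      rw [integral_add_compl hA hfint, htot]
    linarith
  -- exponent comparison
  have hE1 : 1 ≤ lam ^ 2 * r ^ 2 / (σ ^ 2 * δ ^ 4) := by
    rw [le_div_iff₀ (by positivity)]
    rw [div_le_iff₀ hlam] at hrσ
    nlinarith [mul_le_mul hrσ hrσ (by positivity : (0:ℝ) ≤ σ * δ ^ 2)
      (by nlinarith : (0:ℝ) ≤ r * lam)]
  have hexp : Real.exp (-(2050 * lam ^ 2 * r ^ 2 / (σ ^ 2 * δ ^ 4))) ≤ c :=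
    aux_exp lam r δ σ L M T c hδ hσ hLdef hMdef hTdef hcdef hE1
  -- conclude
  have hS3T : S ≤ 3 * T := by
    have h1 : σ ≤ T := by rw [hTdef]; exact le_max_left σ M
    have h2 := aux_sqrt σ hσ
    rw [hSdef]
    linarith only [h1, h2]
  rw [show Real.sqrt (2 * Real.pi * σ ^ 2) = S from hSdef.symm]
  rw [div_le_iff₀ hS]
  have hfin : Real.exp (-(2050 * lam ^ 2 * r ^ 2 / (σ ^ 2 * δ ^ 4))) * S ≤ c * (3 * T) :=
    mul_le_mul hexp hS3T hS.le hc.le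
  nlinarith [hupper, hfin, hc.le, hT.le, mul_nonneg hc.le hT.le]
end

section
/- There exists a numerical constant C > 0 such that for every σ² ∈ (0,1) and every real number α ≥ σ: (i) the supremum, over all Lebesgue-measurable sets A ⊆ ℝ with Lebesgue measure at most α, of (1/√(2πσ²)) ∫_A e^{−t²/(2σ²)} dt equals (1/√(2πσ²)) ∫_{−α/2}^{α/2} e^{−t²/(2σ²)} dt; and (ii) this quantity is at most 1 − e^{−Cα²/σ²}. -/
open MeasureTheory

private lemma gauss_integrable {σ : ℝ} (hσ : 0 < σ) :
    Integrable (fun t : ℝ => Real.exp (-t ^ 2 / (2 * σ ^ 2))) := by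
  have h : (fun t : ℝ => Real.exp (-t ^ 2 / (2 * σ ^ 2)))
      = fun t : ℝ => Real.exp (-(1 / (2 * σ ^ 2)) * t ^ 2) := by
    funext t; congr 1; ring
  rw [h]
  exact integrable_exp_neg_mul_sq (by positivity)

private lemma gauss_total {σ : ℝ} (hσ : 0 < σ) :
    (∫ t : ℝ, Real.exp (-t ^ 2 / (2 * σ ^ 2))) = Real.sqrt (2 * Real.pi * σ ^ 2) := by
  have h : (fun t : ℝ => Real.exp (-t ^ 2 / (2 * σ ^ 2)))
      = fun t : ℝ => Real.exp (-(1 / (2 * σ ^ 2)) * t ^ 2) := by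
    funext t; congr 1; ring
  rw [h, integral_gaussian]
  congr 1
  field_simp

private lemma gauss_key {σ α : ℝ} (hσ : 0 < σ) (hα : σ ≤ α) {A : Set ℝ}
    (hA : MeasurableSet A) (hvol : volume A ≤ ENNReal.ofReal α) :
    (∫ t in A, Real.exp (-t ^ 2 / (2 * σ ^ 2)))
      ≤ ∫ t in Set.Icc (-(α / 2)) (α / 2), Real.exp (-t ^ 2 / (2 * σ ^ 2)) := by
  set f : ℝ → ℝ := fun t => Real.exp (-t ^ 2 / (2 * σ ^ 2)) with hf
  set B := Set.Icc (-(α / 2)) (α / 2) with hB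
  have hα0 : 0 < α := lt_of_lt_of_le hσ hα
  have hBm : MeasurableSet B := measurableSet_Icc
  have hi := gauss_integrable hσ
  have hvolB : volume B = ENNReal.ofReal α := by
    rw [hB, Real.volume_Icc]; congr 1; ring
  have hfinAB : volume (A \ B) < ⊤ :=
    lt_of_le_of_lt (le_trans (measure_mono Set.diff_subset) hvol) ENNReal.ofReal_lt_top
  have hfinBA : volume (B \ A) < ⊤ := by
    refine lt_of_le_of_lt (measure_mono Set.diff_subset) ?_
    rw [hvolB]; exact ENNReal.ofReal_lt_top
  have hfinI : volume (A ∩ B) ≠ ⊤ := by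
    refine ne_of_lt (lt_of_le_of_lt (measure_mono Set.inter_subset_right) ?_)
    rw [hvolB]; exact ENNReal.ofReal_lt_top
  have hdiff : volume (A \ B) ≤ volume (B \ A) := by
    have h1 : volume (A ∩ B) + volume (A \ B) = volume A := measure_inter_add_diff A hBm
    have h2 : volume (B ∩ A) + volume (B \ A) = volume B := measure_inter_add_diff B hA
    rw [Set.inter_comm] at h2
    have h3 : volume (A ∩ B) + volume (A \ B) ≤ volume (A ∩ B) + volume (B \ A) := by
      rw [h1, h2, hvolB]; exact hvol
    exact (ENNReal.add_le_add_iff_left hfinI).mp h3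
  set m : ℝ := Real.exp (-(α / 2) ^ 2 / (2 * σ ^ 2)) with hm
  have hm0 : 0 ≤ m := (Real.exp_pos _).le
  have h2σ : (0:ℝ) < 2 * σ ^ 2 := by positivity
  have hub : ∀ t ∈ A \ B, f t ≤ m := by
    intro t ht
    have h' : ¬ (-(α / 2) ≤ t ∧ t ≤ α / 2) := by
      simpa [hB, Set.mem_Icc] using ht.2
    have ht2 : (α / 2) ^ 2 ≤ t ^ 2 := by
      rcases lt_or_ge t (-(α / 2)) with h | h
      · nlinarith
      · have := lt_of_not_ge fun hle => h' ⟨h, hle⟩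
        nlinarith
    refine Real.exp_le_exp.mpr ?_
    rw [div_le_div_iff₀ h2σ h2σ]
    nlinarith
  have hlb : ∀ t ∈ B, m ≤ f t := by
    intro t ht
    rw [hB, Set.mem_Icc] at ht
    have ht2 : t ^ 2 ≤ (α / 2) ^ 2 := by nlinarith [ht.1, ht.2]
    refine Real.exp_le_exp.mpr ?_
    rw [div_le_div_iff₀ h2σ h2σ]
    nlinarith
  have e1 : (∫ t in A ∩ B, f t) + ∫ t in A \ B, f t = ∫ t in A, f t :=
    integral_inter_add_diff hBm hi.integrableOn
  have e2 : (∫ t in A ∩ B, f t) + ∫ t in B \ A, f t = ∫ t in B, f t := by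
    rw [Set.inter_comm]
    exact integral_inter_add_diff hA hi.integrableOn
  have hABs : (∫ t in A \ B, f t) ≤ (volume (A \ B)).toReal * m := by
    have := setIntegral_mono_on hi.integrableOn
      (integrableOn_const (ne_of_lt hfinAB)) (hA.diff hBm) hub
    simpa [setIntegral_const, smul_eq_mul, Measure.real] using this
  have hBAs : (volume (B \ A)).toReal * m ≤ ∫ t in B \ A, f t := by
    have := setIntegral_mono_on (integrableOn_const (ne_of_lt hfinBA))
      hi.integrableOn (hBm.diff hA) (fun t ht => hlb t ht.1)
    simpa [setIntegral_const, smul_eq_mul, Measure.real] using this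
  have hmono : (volume (A \ B)).toReal ≤ (volume (B \ A)).toReal :=
    (ENNReal.toReal_le_toReal (ne_of_lt hfinAB) (ne_of_lt hfinBA)).mpr hdiff
  have := mul_le_mul_of_nonneg_right hmono hm0
  linarith

private lemma gauss_bound {σ α : ℝ} (hσ : 0 < σ) (hα : σ ≤ α) :
    (∫ t in (-(α / 2))..(α / 2), Real.exp (-t ^ 2 / (2 * σ ^ 2))) /
        Real.sqrt (2 * Real.pi * σ ^ 2)
      ≤ 1 - Real.exp (-(2 * α ^ 2 / σ ^ 2)) := by
  set f : ℝ → ℝ := fun t => Real.exp (-t ^ 2 / (2 * σ ^ 2)) with hf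
  have hα0 : 0 < α := lt_of_lt_of_le hσ hα
  have hi := gauss_integrable hσ
  have hc0 : (0:ℝ) < Real.sqrt (2 * Real.pi * σ ^ 2) :=
    Real.sqrt_pos.mpr (by positivity)
  set c := Real.sqrt (2 * Real.pi * σ ^ 2) with hcdef
  have hceq : c = Real.sqrt (2 * Real.pi) * σ := by
    rw [hcdef, Real.sqrt_mul (by positivity), Real.sqrt_sq hσ.le]
  set L : ℝ := α / 2 + σ with hL
  set m : ℝ := Real.exp (-L ^ 2 / (2 * σ ^ 2)) with hm
  have hint : ∀ a b : ℝ, IntervalIntegrable f volume a b := fun a b => hi.intervalIntegrable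
  have h1 : (∫ t in (-L)..(-(α / 2)), f t) + (∫ t in (-(α / 2))..(α / 2), f t)
      + (∫ t in (α / 2)..L, f t) = ∫ t in (-L)..L, f t := by
    rw [intervalIntegral.integral_add_adjacent_intervals (hint _ _) (hint _ _)]
    exact intervalIntegral.integral_add_adjacent_intervals (hint _ _) (hint _ _)
  have h2 : (∫ t in (-L)..L, f t) ≤ c := by
    rw [intervalIntegral.integral_of_le (by simp [hL]; linarith)]
    calc (∫ t in Set.Ioc (-L) L, f t)
        ≤ ∫ t, f t :=
          setIntegral_le_integral hi (Filter.Eventually.of_forall fun t => (Real.exp_pos _).le)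
      _ = c := gauss_total hσ
  have h2σ : (0:ℝ) < 2 * σ ^ 2 := by positivity
  have h3 : σ * m ≤ ∫ t in (α / 2)..L, f t := by
    have hle : α / 2 ≤ L := by simp [hL]; linarith
    have := intervalIntegral.integral_mono_on (f := fun _ => m) (g := f) hle
      intervalIntegrable_const (hint _ _)
      (fun t ht => by
        rw [Set.mem_Icc] at ht
        show m ≤ Real.exp (-t ^ 2 / (2 * σ ^ 2))
        rw [hm]
        refine Real.exp_le_exp.mpr ?_
        rw [div_le_div_iff₀ h2σ h2σ]
        have h5 : 0 ≤ (L + t) * (L - t) :=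
          mul_nonneg (by linarith [ht.1, ht.2, hα0]) (by linarith [ht.2])
        nlinarith [mul_nonneg h5 h2σ.le])
    rw [intervalIntegral.integral_const, smul_eq_mul] at this
    calc σ * m = (L - α / 2) * m := by rw [hL]; ring_nf
    _ ≤ _ := this
  have h4 : σ * m ≤ ∫ t in (-L)..(-(α / 2)), f t := by
    have hle : -L ≤ -(α / 2) := by simp [hL]; linarith
    have := intervalIntegral.integral_mono_on (f := fun _ => m) (g := f) hle
      intervalIntegrable_const (hint _ _)
      (fun t ht => by
        rw [Set.mem_Icc] at ht
        show m ≤ Real.exp (-t ^ 2 / (2 * σ ^ 2))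
        rw [hm]
        refine Real.exp_le_exp.mpr ?_
        rw [div_le_div_iff₀ h2σ h2σ]
        have hL0 : (0:ℝ) < L := by rw [hL]; linarith
        have h5 : 0 ≤ (L + t) * (L - t) :=
          mul_nonneg (by linarith [ht.1]) (by linarith [ht.2, hα0])
        nlinarith [mul_nonneg h5 h2σ.le])
    rw [intervalIntegral.integral_const, smul_eq_mul] at this
    calc σ * m = (-(α / 2) - -L) * m := by rw [hL]; ring_nf
    _ ≤ _ := this
  have hmain : (∫ t in (-(α / 2))..(α / 2), f t) ≤ c - 2 * σ * m := by linarith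
  -- key numeric inequality : c * exp(-(2α²/σ²)) ≤ 2σm
  have hσ2 : (0:ℝ) < σ ^ 2 := by positivity
  have hE : (7:ℝ) / 8 ≤ 2 * α ^ 2 / σ ^ 2 - L ^ 2 / (2 * σ ^ 2) := by
    have heq : 2 * α ^ 2 / σ ^ 2 - L ^ 2 / (2 * σ ^ 2) = (4 * α ^ 2 - L ^ 2) / (2 * σ ^ 2) := by
      field_simp; ring
    rw [heq, le_div_iff₀ h2σ]
    have h1 : σ * α ≤ α * α := by nlinarith
    have h2 : σ * σ ≤ α * α := by nlinarith
    rw [hL]; nlinarith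
  have hs3 : Real.sqrt (2 * Real.pi) ≤ 3 := by
    have : (3:ℝ) = Real.sqrt 9 := by
      rw [show (9:ℝ) = 3 ^ 2 by norm_num, Real.sqrt_sq]; norm_num
    rw [this]
    exact Real.sqrt_le_sqrt (by nlinarith [Real.pi_le_four])
  have hexpE : (15:ℝ) / 8 ≤ Real.exp (2 * α ^ 2 / σ ^ 2 - L ^ 2 / (2 * σ ^ 2)) := by
    have := Real.add_one_le_exp (2 * α ^ 2 / σ ^ 2 - L ^ 2 / (2 * σ ^ 2))
    have h78 : Real.exp (2 * α ^ 2 / σ ^ 2 - L ^ 2 / (2 * σ ^ 2)) ≥ (7:ℝ)/8 + 1 := by linarith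
    linarith
  have hsplit : m = Real.exp (-(2 * α ^ 2 / σ ^ 2)) *
      Real.exp (2 * α ^ 2 / σ ^ 2 - L ^ 2 / (2 * σ ^ 2)) := by
    rw [hm, ← Real.exp_add]; congr 1; ring
  have hkey : c * Real.exp (-(2 * α ^ 2 / σ ^ 2)) ≤ 2 * σ * m := by
    rw [hceq, hsplit]
    have hE0 : (0:ℝ) < Real.exp (-(2 * α ^ 2 / σ ^ 2)) := Real.exp_pos _
    have h5 : Real.sqrt (2 * Real.pi) ≤ 2 * Real.exp (2 * α ^ 2 / σ ^ 2 - L ^ 2 / (2 * σ ^ 2)) := by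
      linarith
    have h6 : (0:ℝ) ≤ σ * Real.exp (-(2 * α ^ 2 / σ ^ 2)) := by positivity
    have h7 := mul_le_mul_of_nonneg_right h5 h6
    calc Real.sqrt (2 * Real.pi) * σ * Real.exp (-(2 * α ^ 2 / σ ^ 2))
        = Real.sqrt (2 * Real.pi) * (σ * Real.exp (-(2 * α ^ 2 / σ ^ 2))) := by ring
      _ ≤ 2 * Real.exp (2 * α ^ 2 / σ ^ 2 - L ^ 2 / (2 * σ ^ 2)) *
            (σ * Real.exp (-(2 * α ^ 2 / σ ^ 2))) := h7
      _ = 2 * σ * (Real.exp (-(2 * α ^ 2 / σ ^ 2)) *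
            Real.exp (2 * α ^ 2 / σ ^ 2 - L ^ 2 / (2 * σ ^ 2))) := by ring
  rw [div_le_iff₀ hc0]
  have hfin : (1 - Real.exp (-(2 * α ^ 2 / σ ^ 2))) * c
      = c - c * Real.exp (-(2 * α ^ 2 / σ ^ 2)) := by ring
  rw [hfin]
  linarith

/-- Among all measurable sets of Lebesgue measure at most `α`, the Gaussian measure (variance
`σ²`) is maximized by the centered interval `[-α/2, α/2]`, and this maximal value is at most
`1 - e^{-Cα²/σ²}` for a numerical constant `C`. -/
theorem gaussian_measure_of_small_sets :
    ∃ C : ℝ, 0 < C ∧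
      ∀ σ : ℝ, 0 < σ → σ ^ 2 < 1 →
      ∀ α : ℝ, σ ≤ α →
        (sSup {x : ℝ | ∃ A : Set ℝ, MeasurableSet A ∧ volume A ≤ ENNReal.ofReal α ∧
            x = (∫ t in A, Real.exp (-t ^ 2 / (2 * σ ^ 2))) /
              Real.sqrt (2 * Real.pi * σ ^ 2)}
          = (∫ t in (-(α / 2))..(α / 2), Real.exp (-t ^ 2 / (2 * σ ^ 2))) /
              Real.sqrt (2 * Real.pi * σ ^ 2)) ∧
        (∫ t in (-(α / 2))..(α / 2), Real.exp (-t ^ 2 / (2 * σ ^ 2))) /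
              Real.sqrt (2 * Real.pi * σ ^ 2)
          ≤ 1 - Real.exp (-(C * α ^ 2 / σ ^ 2)) := by
  refine ⟨2, by norm_num, fun σ hσ _ α hα => ?_⟩
  have hα0 : 0 < α := lt_of_lt_of_le hσ hα
  have hc0 : (0:ℝ) < Real.sqrt (2 * Real.pi * σ ^ 2) :=
    Real.sqrt_pos.mpr (by positivity)
  have hIcc : (∫ t in Set.Icc (-(α / 2)) (α / 2), Real.exp (-t ^ 2 / (2 * σ ^ 2)))
      = ∫ t in (-(α / 2))..(α / 2), Real.exp (-t ^ 2 / (2 * σ ^ 2)) := by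
    rw [intervalIntegral.integral_of_le (by linarith), integral_Icc_eq_integral_Ioc]
  refine ⟨?_, gauss_bound hσ hα⟩
  apply IsGreatest.csSup_eq
  constructor
  · refine ⟨Set.Icc (-(α / 2)) (α / 2), measurableSet_Icc, ?_, by rw [hIcc]⟩
    rw [Real.volume_Icc]
    exact le_of_eq (by congr 1; ring)
  · rintro x ⟨A, hA, hvol, rfl⟩
    rw [← hIcc]
    exact div_le_div_of_nonneg_right (gauss_key hσ hα hA hvol) hc0.le
end

section
/- For every function g ∈ 𝒢 one has | ∫_ℝ g(t) e^{−t²/2} dt | ≤ 2 ∫_0^∞ t e^{−t²/2} dt (and the right-hand side equals 2). -/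
open MeasureTheory

lemma k_integrable : Integrable (fun s : ℝ => s * Real.exp (-s ^ 2 / 2)) := by
  have h := integrable_mul_exp_neg_mul_sq (show (0:ℝ) < 1/2 by norm_num)
  have he : (fun s : ℝ => s * Real.exp (-s ^ 2 / 2))
      = fun s : ℝ => s * Real.exp (-(1/2) * s ^ 2) := by
    funext s; congr 1; ring
  rw [he]; exact h

lemma exp_halfsq_integrable : Integrable (fun t : ℝ => Real.exp (-t ^ 2 / 2)) := by
  have h := integrable_exp_neg_mul_sq (show (0:ℝ) < 1/2 by norm_num)
  have he : (fun t : ℝ => Real.exp (-t ^ 2 / 2))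
      = fun t : ℝ => Real.exp (-(1/2) * t ^ 2) := by
    funext t; congr 1; ring
  rw [he]; exact h

lemma integral_Ioi_k (a : ℝ) :
    ∫ s in Set.Ioi a, s * Real.exp (-s ^ 2 / 2) = Real.exp (-a ^ 2 / 2) := by
  have hderiv : ∀ x ∈ Set.Ici a,
      HasDerivAt (fun s : ℝ => -Real.exp (-s ^ 2 / 2)) (x * Real.exp (-x ^ 2 / 2)) x := by
    intro x _
    have h1 : HasDerivAt (fun s : ℝ => -s ^ 2 / 2) (-x) x := by
      have h0 := ((hasDerivAt_pow 2 x).neg.div_const 2)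
      exact h0.congr_deriv (by norm_num; ring)
    have := (h1.exp).neg
    exact this.congr_deriv (by ring)
  have hint : IntegrableOn (fun s : ℝ => s * Real.exp (-s ^ 2 / 2)) (Set.Ioi a) :=
    k_integrable.integrableOn
  have hlim : Filter.Tendsto (fun s : ℝ => -Real.exp (-s ^ 2 / 2)) Filter.atTop (nhds 0) := by
    rw [← neg_zero]
    apply Filter.Tendsto.neg
    apply Real.tendsto_exp_atBot.comp
    have h2 : Filter.Tendsto (fun s : ℝ => s ^ 2) Filter.atTop Filter.atTop :=
      Filter.tendsto_pow_atTop two_ne_zero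
    have h3 := h2.const_mul_atTop_of_neg (show (-(1/2):ℝ) < 0 by norm_num)
    have he : (fun s : ℝ => -s ^ 2 / 2) = fun s : ℝ => -(1/2) * s ^ 2 := by
      funext s; ring
    rw [he]; exact h3
  have := integral_Ioi_of_hasDerivAt_of_tendsto' hderiv hint hlim
  simpa using this

/-- The class `𝒢` of bounded measurable functions on `ℝ` whose integral over every interval is
bounded by `1` in absolute value. -/
def IntervalBddClass (g : ℝ → ℝ) : Prop :=
  Measurable g ∧ (∃ C : ℝ, ∀ t : ℝ, |g t| ≤ C) ∧
    ∀ a b : ℝ, |∫ t in a..b, g t| ≤ 1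

/-- Proposition: the Gaussian-weighted integral of any `g ∈ 𝒢` is bounded by
`2 ∫_0^∞ t e^{-t²/2} dt`, and this bound equals `2`. -/
theorem gaussian_integral_of_interval_bdd :
    (∀ g : ℝ → ℝ, IntervalBddClass g →
      |∫ t : ℝ, g t * Real.exp (-t ^ 2 / 2)| ≤
        2 * ∫ t in Set.Ioi (0 : ℝ), t * Real.exp (-t ^ 2 / 2)) ∧
    2 * (∫ t in Set.Ioi (0 : ℝ), t * Real.exp (-t ^ 2 / 2)) = 2 := by
  have hIoi0 : (∫ t in Set.Ioi (0 : ℝ), t * Real.exp (-t ^ 2 / 2)) = 1 := by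
    have := integral_Ioi_k 0
    simpa using this
  constructor
  · rintro g ⟨hmeas, ⟨C, hC⟩, hbdd⟩
    set k : ℝ → ℝ := fun s => s * Real.exp (-s ^ 2 / 2) with hk_def
    have hk_cont : Continuous k := by fun_prop
    set C' : ℝ := max C 0 with hC'_def
    have hC' : ∀ t, |g t| ≤ C' := fun t => (hC t).trans (le_max_left _ _)
    set F : ℝ → ℝ → ℝ := fun t s => if |t| < s then k s * g t else 0 with hF_def
    -- slices in s
    have hslice : ∀ t : ℝ, (fun s => F t s)
        = (Set.Ioi |t|).indicator (fun s => k s * g t) := by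
      intro t; funext s
      simp [hF_def, Set.indicator_apply, Set.mem_Ioi]
    have hFint_t : ∀ t : ℝ, Integrable (fun s => F t s) := by
      intro t
      rw [hslice t]
      exact (k_integrable.mul_const (g t)).indicator measurableSet_Ioi
    have hFinner : ∀ t : ℝ, (∫ s, F t s) = g t * Real.exp (-t ^ 2 / 2) := by
      intro t
      rw [hslice t, integral_indicator measurableSet_Ioi, integral_mul_const,
        integral_Ioi_k, sq_abs, mul_comm]
    -- measurability of uncurried F
    have hFu_meas : Measurable (Function.uncurry F) := by
      apply Measurable.ite
      · exact measurableSet_lt (measurable_fst.abs) measurable_snd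
      · exact (hk_cont.measurable.comp measurable_snd).mul (hmeas.comp measurable_fst)
      · exact measurable_const
    -- integral of norms of slices
    have hnormslice : ∀ t : ℝ, (fun s => ‖F t s‖)
        = (Set.Ioi |t|).indicator (fun s => k s * |g t|) := by
      intro t; funext s
      simp only [hF_def, Set.indicator_apply, Set.mem_Ioi]
      split_ifs with h
      · have hs0 : (0:ℝ) ≤ s := le_of_lt (lt_of_le_of_lt (abs_nonneg t) h)
        have hks : 0 ≤ k s := mul_nonneg hs0 (Real.exp_pos _).le
        rw [Real.norm_eq_abs, abs_mul, abs_of_nonneg hks]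
      · simp
    have hnorm : ∀ t : ℝ, (∫ s, ‖F t s‖) = |g t| * Real.exp (-t ^ 2 / 2) := by
      intro t
      rw [hnormslice t, integral_indicator measurableSet_Ioi, integral_mul_const,
        integral_Ioi_k, sq_abs, mul_comm]
    -- integrability on the product
    have hFu_int : Integrable (Function.uncurry F) (volume.prod volume) := by
      rw [integrable_prod_iff hFu_meas.aestronglyMeasurable]
      constructor
      · exact Filter.Eventually.of_forall fun t => hFint_t t
      · have heq : (fun t => ∫ s, ‖Function.uncurry F (t, s)‖)
            = fun t => |g t| * Real.exp (-t ^ 2 / 2) := by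
          funext t; exact hnorm t
        rw [heq]
        apply (exp_halfsq_integrable.const_mul C').mono'
        · exact (hmeas.abs.mul (by fun_prop)).aestronglyMeasurable
        · refine Filter.Eventually.of_forall fun t => ?_
          rw [Real.norm_eq_abs, abs_mul, abs_abs, abs_of_nonneg (Real.exp_pos _).le]
          exact mul_le_mul_of_nonneg_right (hC' t) (Real.exp_pos _).le
    -- swap the integrals
    have hswap := integral_integral_swap hFu_int
    -- inner integral in t
    have htslice : ∀ s : ℝ, (fun t => F t s)
        = (Set.Ioo (-s) s).indicator (fun t => k s * g t) := by
      intro s; funext t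
      simp [hF_def, Set.indicator_apply, Set.mem_Ioo, abs_lt]
    have htinner : ∀ s : ℝ, (∫ t, F t s) = k s * ∫ t in Set.Ioo (-s) s, g t := by
      intro s
      rw [htslice s, integral_indicator measurableSet_Ioo, integral_const_mul]
    set h : ℝ → ℝ := fun s => k s * ∫ t in Set.Ioo (-s) s, g t with hh_def
    have hmain : (∫ t : ℝ, g t * Real.exp (-t ^ 2 / 2)) = ∫ s, h s := by
      calc (∫ t : ℝ, g t * Real.exp (-t ^ 2 / 2)) = ∫ t, ∫ s, F t s := by
            congr 1; funext t; exact (hFinner t).symm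
        _ = ∫ s, ∫ t, F t s := hswap
        _ = ∫ s, h s := by congr 1; funext s; exact htinner s
    have h_int : Integrable h := by
      have := hFu_int.integral_prod_right
      have heq : (fun s => ∫ t, Function.uncurry F (t, s)) = h := by
        funext s; exact htinner s
      rwa [heq] at this
    -- h vanishes on nonpositive s
    have hzero : ∀ s : ℝ, s ∉ Set.Ioi (0:ℝ) → h s = 0 := by
      intro s hs
      simp only [Set.mem_Ioi, not_lt] at hs
      have : Set.Ioo (-s) s = ∅ := Set.Ioo_eq_empty (by intro hlt; linarith [neg_nonneg.mpr hs])
      simp [hh_def, this]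
    have hres : (∫ s, h s) = ∫ s in Set.Ioi (0:ℝ), h s :=
      (setIntegral_eq_integral_of_forall_compl_eq_zero hzero).symm
    -- pointwise bound on Ioi 0
    have hbound : ∀ s ∈ Set.Ioi (0:ℝ), |h s| ≤ k s := by
      intro s hs
      have hs0 : (0:ℝ) < s := hs
      have hks : 0 ≤ k s := mul_nonneg hs0.le (Real.exp_pos _).le
      have hI : |∫ t in Set.Ioo (-s) s, g t| ≤ 1 := by
        have h1 : (∫ t in Set.Ioo (-s) s, g t) = ∫ t in (-s)..s, g t := by
          rw [intervalIntegral.integral_of_le (by linarith : -s ≤ s),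
            integral_Ioc_eq_integral_Ioo]
        rw [h1]; exact hbdd (-s) s
      calc |h s| = k s * |∫ t in Set.Ioo (-s) s, g t| := by
            rw [hh_def, abs_mul, abs_of_nonneg hks]
        _ ≤ k s * 1 := mul_le_mul_of_nonneg_left hI hks
        _ = k s := mul_one _
    calc |∫ t : ℝ, g t * Real.exp (-t ^ 2 / 2)| = |∫ s in Set.Ioi (0:ℝ), h s| := by
          rw [hmain, hres]
      _ ≤ ∫ s in Set.Ioi (0:ℝ), |h s| := by
          simpa [Real.norm_eq_abs] using
            norm_integral_le_integral_norm (μ := volume.restrict (Set.Ioi (0:ℝ))) h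
      _ ≤ ∫ s in Set.Ioi (0:ℝ), k s := by
          apply setIntegral_mono_on (h_int.abs.integrableOn) (k_integrable.integrableOn)
            measurableSet_Ioi hbound
      _ ≤ 2 * ∫ t in Set.Ioi (0 : ℝ), t * Real.exp (-t ^ 2 / 2) := by
          rw [hIoi0]; norm_num [hk_def, hIoi0]
  · rw [hIoi0]; norm_num
end

section
/- There exists a numerical constant C > 0 such that for every δ ∈ (0,1] and every function g ∈ 𝒢 satisfying g(t) ≥ −1 for all t ∈ ℝ, one has ∫_ℝ 1_{{g(t) ≤ δ}} e^{−t²/2} dt ≥ e^{−C/δ²}. -/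
open MeasureTheory

/-- Lemma: for `g ∈ 𝒢` with `g ≥ -1`, the Gaussian mass of the sublevel set `{g ≤ δ}` is at
least `e^{-C/δ²}` for a numerical constant `C`. -/
theorem gaussian_mass_sublevel_of_interval_bdd :
    ∃ C : ℝ, 0 < C ∧
      ∀ δ : ℝ, 0 < δ → δ ≤ 1 →
      ∀ g : ℝ → ℝ, IntervalBddClass g → (∀ t : ℝ, -1 ≤ g t) →
        Real.exp (-C / δ ^ 2) ≤ ∫ t in {t : ℝ | g t ≤ δ}, Real.exp (-t ^ 2 / 2) := by
  refine ⟨9/2, by norm_num, fun δ hδ hδ1 g hg hg1 => ?_⟩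
  obtain ⟨hmeas, ⟨B, hB⟩, hint⟩ := hg
  set L : ℝ := 3 / δ with hL
  have hL0 : 0 < L := by positivity
  set S : Set ℝ := {t : ℝ | g t ≤ δ} with hSdef
  have hS : MeasurableSet S := measurableSet_le hmeas measurable_const
  set I : Set ℝ := Set.Ioc (0:ℝ) L with hIdef
  have hImeas : MeasurableSet I := measurableSet_Ioc
  have hIvol : volume I = ENNReal.ofReal L := by simp [hIdef]
  have hIfin : volume I ≠ ⊤ := by rw [hIvol]; exact ENNReal.ofReal_ne_top
  -- g is integrable on I
  have hgint : IntegrableOn g I := by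
    refine Integrable.mono' (integrable_const B) hmeas.aestronglyMeasurable ?_
    exact Filter.Eventually.of_forall fun t => hB t
  -- lower minorant h
  set h : ℝ → ℝ := fun t => S.indicator (fun _ => -1 - δ) t + δ with hhdef
  have hIfinMeas : IsFiniteMeasure (volume.restrict I) :=
    ⟨by rw [Measure.restrict_apply_univ, hIvol]; exact ENNReal.ofReal_lt_top⟩
  have hind : Integrable (S.indicator fun _ => (-1 - δ : ℝ)) (volume.restrict I) :=
    (integrable_const _).indicator hS
  have hhint : IntegrableOn h I := hind.add (integrable_const δ)
  have hle : ∀ t, h t ≤ g t := by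
    intro t
    by_cases ht : t ∈ S
    · simp only [hhdef, Set.indicator_of_mem ht]
      have := hg1 t
      linarith
    · simp only [hhdef, Set.indicator_of_notMem ht]
      have : ¬ g t ≤ δ := ht
      linarith [not_le.mp this]
  have hmono : ∫ t in I, h t ≤ ∫ t in I, g t :=
    integral_mono hhint hgint (fun t => hle t)
  set m : ℝ := (volume (S ∩ I)).toReal with hm
  have hSIfin : volume (S ∩ I) ≠ ⊤ :=
    (lt_of_le_of_lt (measure_mono Set.inter_subset_right) hIfin.lt_top).ne
  have hcalc : ∫ t in I, h t = (-1 - δ) * m + δ * L := by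
    simp only [hhdef]
    rw [integral_add hind (integrable_const δ), integral_indicator_const _ hS,
      measureReal_def, Measure.restrict_apply hS, integral_const, measureReal_def, Measure.restrict_apply_univ, hIvol,
      ENNReal.toReal_ofReal hL0.le]
    simp [hm, smul_eq_mul, mul_comm]
  have hub : ∫ t in I, g t ≤ 1 := by
    have := hint 0 L
    rw [intervalIntegral.integral_of_le hL0.le] at this
    exact le_trans (le_abs_self _) this
  have hδL : δ * L = 3 := by rw [hL]; field_simp
  have hm1 : 1 ≤ m := by
    have key : (-1 - δ) * m + δ * L ≤ 1 := le_trans (hcalc ▸ hmono) hub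
    rw [hδL] at key
    nlinarith [ENNReal.toReal_nonneg (a := volume (S ∩ I))]
  -- now the gaussian integral bound
  set c : ℝ := Real.exp (-L ^ 2 / 2) with hc
  have hfin : Integrable (fun t : ℝ => Real.exp (-t ^ 2 / 2)) := by
    have := integrable_exp_neg_mul_sq (b := (1/2 : ℝ)) (by norm_num)
    convert this using 2 with t
    ring_nf
  have hstep1 : c * m ≤ ∫ t in S ∩ I, Real.exp (-t ^ 2 / 2) := by
    refine setIntegral_ge_of_const_le_real (hS.inter hImeas) hSIfin ?_ (hfin.integrableOn)
    intro t ht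
    rw [hc]
    apply Real.exp_le_exp.mpr
    have ht1 : 0 < t := ht.2.1
    have ht2 : t ≤ L := ht.2.2
    have : t ^ 2 ≤ L ^ 2 := by nlinarith
    linarith
  have hstep2 : ∫ t in S ∩ I, Real.exp (-t ^ 2 / 2) ≤ ∫ t in S, Real.exp (-t ^ 2 / 2) := by
    refine setIntegral_mono_set hfin.integrableOn ?_ ?_
    · exact Filter.Eventually.of_forall fun t => (Real.exp_pos _).le
    · exact Filter.Eventually.of_forall Set.inter_subset_left
  have hexp : Real.exp (-(9/2) / δ ^ 2) = c := by
    rw [hc, hL]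
    congr 1
    field_simp
    ring
  calc Real.exp (-(9/2) / δ ^ 2) = c := hexp
    _ = c * 1 := by ring
    _ ≤ c * m := by nlinarith [Real.exp_pos (-L ^ 2 / 2)]
    _ ≤ ∫ t in S ∩ I, Real.exp (-t ^ 2 / 2) := hstep1
    _ ≤ ∫ t in S, Real.exp (-t ^ 2 / 2) := hstep2
end

section
/- Let r, δ > 0 and let g, g₁ : ℝ → ℝ be convex, differentiable functions satisfying sup_{s∈ℝ} |g(s) − g₁(s)| ≤ r. If at some point t ∈ ℝ one has g₁'(t) − g'(t) > δ, then g'(t + 4r/δ) ≥ g'(t) + δ/2. -/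
/-- If `g, g₁` are convex differentiable functions on `ℝ` that are uniformly `r`-close, and at
some point `t` the derivative of `g₁` exceeds that of `g` by more than `δ`, then the derivative
of `g` increases by at least `δ/2` over the interval `[t, t + 4r/δ]`. -/
theorem deriv_increase_of_close_convex
    (r δ : ℝ) (hr : 0 < r) (hδ : 0 < δ)
    (g g₁ : ℝ → ℝ)
    (hg : ConvexOn ℝ Set.univ g) (hg₁ : ConvexOn ℝ Set.univ g₁)
    (hgd : Differentiable ℝ g) (hg₁d : Differentiable ℝ g₁)
    (hclose : ∀ s : ℝ, |g s - g₁ s| ≤ r)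
    (t : ℝ) (ht : δ < deriv g₁ t - deriv g t) :
    deriv g t + δ / 2 ≤ deriv g (t + 4 * r / δ) := by
  set L : ℝ := 4 * r / δ with hL
  have hLpos : 0 < L := by positivity
  set y : ℝ := t + L with hy
  have hty : t < y := by simp [hy, hLpos]
  have h1 : deriv g₁ t ≤ slope g₁ t y :=
    hg₁.deriv_le_slope (Set.mem_univ t) (Set.mem_univ y) hty (hg₁d t)
  have h2 : slope g t y ≤ deriv g y :=
    hg.slope_le_deriv (Set.mem_univ t) (Set.mem_univ y) hty (hgd y)
  have h3 : slope g₁ t y ≤ slope g t y + δ / 2 := by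
    have hyt : y - t = L := by simp [hy]
    have ha := abs_le.1 (hclose t)
    have hb := abs_le.1 (hclose y)
    rw [slope_def_field, slope_def_field, div_add' _ _ _ (by linarith : (y - t) ≠ 0),
      div_le_div_iff_of_pos_right (by linarith)]
    have : δ / 2 * (y - t) = 2 * r := by
      rw [hyt, hL]; field_simp; ring
    nlinarith [ha.1, ha.2, hb.1, hb.2]
  linarith
end
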